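/- arXiv:1910.06485 — 6 statements merged into one kernel-verified Lean document; each statement's English description precedes it below -/
import Mathlib

section
/- Let R be a ring with identity and m ≥ 1. Then the centrosymmetric matrix ring S_{2m}(R) is Morita equivalent to the group algebra R[C_2] of the cyclic group C_2 of order 2, i.e., the category of left S_{2m}(R)-modules is equivalent to the category of left R[C_2]-modules. -/
/-- The set of centrosymmetric `n × n` matrices over `R`: matrices `a = (a i j)` with
`a i j = a i.rev j.rev` for all `i j : Fin n` (the 0-based version of the 1-based condition
`a_{ij} = a_{n+1-i, n+1-j}` for `1 ≤ i, j ≤ n`). -/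
def centroSet (R : Type*) [Ring R] (n : ℕ) : Set (Matrix (Fin n) (Fin n) R) :=
  {a | ∀ i j, a i j = a i.rev j.rev}

/-- The centrosymmetric matrix ring `S_n(R)`, as a subring of `M_n(R)`. -/
def centroSubring (R : Type*) [Ring R] (n : ℕ) : Subring (Matrix (Fin n) (Fin n) R) where
  carrier := centroSet R n
  zero_mem' := fun i j => by simp
  one_mem' := fun i j => by
    simp only [Matrix.one_apply, Fin.rev_inj]
  add_mem' := fun ha hb i j => by
    simp only [Matrix.add_apply]; rw [ha i j, hb i j]
  neg_mem' := fun ha i j => by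
    simp only [Matrix.neg_apply]; rw [ha i j]
  mul_mem' := by
    intro a b ha hb i j
    simp only [Matrix.mul_apply]
    calc ∑ k, a i k * b k j = ∑ k, a i.rev k.rev * b k.rev j.rev :=
          Finset.sum_congr rfl fun k _ => by rw [← ha i k, ← hb k j]
      _ = ∑ k, a i.rev k * b k j.rev :=
          Fintype.sum_bijective Fin.rev Fin.rev_involutive.bijective _ _ (fun k => rfl)

set_option linter.unusedSectionVars false
set_option maxHeartbeats 800000

open CategoryTheory

section Morita
universe u
variable (A : Type u) [Ring A] (ι : Type) [Fintype ι] [DecidableEq ι]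

instance matMod (M : Type u) [AddCommGroup M] [Module A M] :
    Module (Matrix ι ι A) (ι → M) where
  smul B v i := ∑ j, B i j • v j
  one_smul v := by funext i; show ∑ j, _ • _ = _; simp [Matrix.one_apply]
  mul_smul B C v := by
    funext i
    show ∑ j, (B * C) i j • v j = ∑ j, B i j • ∑ k, C j k • v k
    simp only [Matrix.mul_apply, Finset.sum_smul, Finset.smul_sum, mul_smul]
    rw [Finset.sum_comm]
  smul_zero B := by funext i; show ∑ j, _ • _ = _; simp
  smul_add B v w := by
    funext i
    show ∑ j, B i j • (v j + w j) = (∑ j, B i j • v j) + ∑ j, B i j • w j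
    simp [smul_add, Finset.sum_add_distrib]
  add_smul B C v := by
    funext i
    show ∑ j, (B i j + C i j) • v j = (∑ j, B i j • v j) + ∑ j, C i j • v j
    simp [add_smul, Finset.sum_add_distrib]
  zero_smul v := by funext i; show ∑ j, _ • _ = _; simp

lemma matMod_smul_def {M : Type u} [AddCommGroup M] [Module A M]
    (B : Matrix ι ι A) (v : ι → M) (i : ι) : (B • v) i = ∑ j, B i j • v j := rfl

end Morita

section Morita2
universe u
variable (A : Type u) [Ring A] (ι : Type) [Fintype ι] [DecidableEq ι]

/-- The functor `M ↦ Mⁿ` from `A`-modules to `Matrix ι ι A`-modules. -/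
def toMatrixMod : ModuleCat.{u} A ⥤ ModuleCat.{u} (Matrix ι ι A) where
  obj M := ModuleCat.of _ (ι → M)
  map {M N} f := ModuleCat.ofHom
    { toFun := fun v i => f (v i)
      map_add' := fun v w => by funext i; simp
      map_smul' := fun B v => by
        funext i
        show f ((B • v) i) = ∑ j, B i j • f (v j)
        rw [matMod_smul_def, map_sum]
        simp }
  map_id M := by ext v; rfl
  map_comp f g := by ext v; rfl

end Morita2


section Morita3
universe u
variable (A : Type u) [Ring A] {ι : Type} [Fintype ι] [DecidableEq ι] (i₀ : ι)

/-- The idempotent `E_{i₀ i₀}`. -/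
abbrev eMat : Matrix ι ι A := Matrix.single i₀ i₀ 1

/-- The constant diagonal matrix. -/
abbrev dg {A : Type u} [Ring A] {ι : Type} [DecidableEq ι] (a : A) : Matrix ι ι A :=
  Matrix.diagonal (fun _ => a)

lemma dg_mul {a b : A} : dg (ι := ι) (a * b) = dg a * dg b := by
  rw [dg, dg, dg, Matrix.diagonal_mul_diagonal]

lemma dg_add {a b : A} : dg (ι := ι) (a + b) = dg a + dg b := by
  rw [dg, dg, dg, ← Matrix.diagonal_add]

lemma diag_comm_eMat (a : A) :
    eMat A i₀ * dg a = dg a * eMat A i₀ := by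
  ext i j
  simp [Matrix.mul_apply, Matrix.diagonal, Matrix.single, Finset.sum_ite_eq,
    Finset.sum_ite_eq', ite_and]
  aesop

variable (N : Type u) [AddCommGroup N] [Module (Matrix ι ι A) N]

/-- The additive subgroup of `e`-fixed points. -/
def fixedAddSubgroup : AddSubgroup N where
  carrier := {x | eMat A i₀ • x = x}
  add_mem' := fun {x y} hx hy => by simp only [Set.mem_setOf_eq] at *; rw [smul_add, hx, hy]
  zero_mem' := by simp
  neg_mem' := fun {x} hx => by simp only [Set.mem_setOf_eq] at *; rw [smul_neg, hx]

instance fixedModule : Module A (fixedAddSubgroup A i₀ N) where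
  smul a x := ⟨dg a • x.1, by
    have hx := x.2
    change eMat A i₀ • x.1 = x.1 at hx
    change eMat A i₀ • ((dg a : Matrix ι ι A) • x.1) = (dg a : Matrix ι ι A) • x.1
    rw [← mul_smul, diag_comm_eMat, mul_smul, hx]⟩
  one_smul x := Subtype.ext <| by
    show dg (1:A) • x.1 = x.1
    rw [dg, Matrix.diagonal_one, one_smul]
  mul_smul a b x := Subtype.ext <| by
    show dg (a * b) • x.1 = dg a • dg b • x.1
    rw [← mul_smul, dg_mul]
  smul_zero a := Subtype.ext <| by
    show dg a • ((0 : fixedAddSubgroup A i₀ N) : N) = ((0 : fixedAddSubgroup A i₀ N) : N)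
    rw [show ((0 : fixedAddSubgroup A i₀ N) : N) = 0 from rfl, smul_zero]
  smul_add a x y := Subtype.ext <| by
    show dg a • (x.1 + y.1) = dg a • x.1 + dg a • y.1
    rw [smul_add]
  add_smul a b x := Subtype.ext <| by
    show dg (a + b) • x.1 = dg a • x.1 + dg b • x.1
    rw [dg_add, add_smul]
  zero_smul x := Subtype.ext <| by
    show dg (0:A) • x.1 = ((0 : fixedAddSubgroup A i₀ N) : N)
    rw [dg, Matrix.diagonal_zero, zero_smul]; rfl

lemma fixed_smul_def (a : A) (x : fixedAddSubgroup A i₀ N) :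
    (a • x).1 = (dg a : Matrix ι ι A) • x.1 := rfl

lemma mem_fixed_iff (x : N) : x ∈ fixedAddSubgroup A i₀ N ↔ eMat A i₀ • x = x := Iff.rfl

end Morita3

section Morita4
universe u
variable (A : Type u) [Ring A] {ι : Type} [Fintype ι] [DecidableEq ι] (i₀ : ι)

lemma stdBM_apply (i j i' j' : ι) (a : A) :
    Matrix.single i j a i' j' = if i = i' ∧ j = j' then a else 0 := rfl

lemma eMat_smul_pi {M : Type u} [AddCommGroup M] [Module A M] (v : ι → M) :
    (eMat A i₀ • v : ι → M) = Pi.single i₀ (v i₀) := by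
  funext i
  rw [matMod_smul_def, Finset.sum_eq_single i₀]
  · by_cases h : i = i₀
    · rw [h, Pi.single_eq_same]; simp [stdBM_apply]
    · rw [Pi.single_eq_of_ne h]; simp [stdBM_apply, Ne.symm h]
  · intro j _ hj; simp [stdBM_apply, Ne.symm hj]
  · simp

/-- The functor `N ↦ e₀₀ N` from `Matrix ι ι A`-modules to `A`-modules. -/
def fromMatrixMod : ModuleCat.{u} (Matrix ι ι A) ⥤ ModuleCat.{u} A where
  obj N := ModuleCat.of A (fixedAddSubgroup A i₀ N)
  map {N P} f := ModuleCat.ofHom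
    { toFun := fun x => ⟨f x.1, by
        rw [mem_fixed_iff, ← map_smul, (mem_fixed_iff A i₀ N x.1).mp x.2]⟩
      map_add' := fun x y => Subtype.ext <| by simp
      map_smul' := fun a x => Subtype.ext <| by
        show f ((a • x).1) = (dg a : Matrix ι ι A) • f x.1
        rw [fixed_smul_def, map_smul] }
  map_id N := by ext v; rfl
  map_comp f g := by ext v; rfl

/-- The unit: `M ≅ e (ι → M)`. -/
def unitEquiv (M : Type u) [AddCommGroup M] [Module A M] :
    M ≃ₗ[A] fixedAddSubgroup A i₀ (ι → M) where
  toFun x := ⟨(Pi.single i₀ x : ι → M), by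
    rw [mem_fixed_iff, eMat_smul_pi, Pi.single_eq_same]⟩
  map_add' x y := Subtype.ext <| by
    show (Pi.single i₀ (x + y) : ι → M) = Pi.single i₀ x + Pi.single i₀ y
    rw [Pi.single_add]
  map_smul' a x := Subtype.ext <| by
    show (Pi.single i₀ (a • x) : ι → M) = (dg a : Matrix ι ι A) • (Pi.single i₀ x : ι → M)
    funext i
    rw [matMod_smul_def, Finset.sum_eq_single i]
    · by_cases h : i = i₀
      · rw [h]; simp [Matrix.diagonal]
      · simp [Pi.single_eq_of_ne h]
    · intro j _ hj
      simp [Matrix.diagonal_apply_ne _ (Ne.symm hj)]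
    · simp
  invFun v := v.1 i₀
  left_inv x := by simp
  right_inv v := Subtype.ext <| by
    have := (mem_fixed_iff A i₀ (ι → M) v.1).mp v.2
    rw [eMat_smul_pi] at this
    exact this

lemma sum_eMat_diag : ∑ i : ι, Matrix.single i i (1 : A) = 1 := by
  ext k l
  rw [Matrix.sum_apply]
  by_cases h : k = l
  · rw [h, Finset.sum_eq_single l]
    · simp [stdBM_apply, Matrix.one_apply]
    · intro j _ hj; simp [stdBM_apply, hj]
    · simp
  · rw [Finset.sum_eq_zero, Matrix.one_apply_ne h]
    intro j _
    simp only [stdBM_apply, ite_eq_right_iff, and_imp]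
    rintro rfl rfl; exact absurd rfl h

lemma colDecomp (B : Matrix ι ι A) (k : ι) :
    B * Matrix.single k i₀ 1 = ∑ j : ι, Matrix.single j i₀ (B j k) := by
  ext s t
  rw [Matrix.sum_apply]
  have lhs : (B * Matrix.single k i₀ (1:A)) s t = if i₀ = t then B s k else 0 := by
    rw [Matrix.mul_apply, Finset.sum_eq_single k]
    · simp [stdBM_apply]
    · intro j _ hj; simp [stdBM_apply, Ne.symm hj]
    · simp
  rw [lhs, Finset.sum_eq_single s]
  · simp [stdBM_apply]
  · intro j _ hj; simp [stdBM_apply, hj]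
  · simp

lemma eMat_mul_dg (j : ι) (a : A) :
    Matrix.single j i₀ (1 : A) * dg a = Matrix.single j i₀ a := by
  ext s t
  rw [dg, Matrix.mul_diagonal]
  simp only [stdBM_apply]
  split_ifs <;> simp

/-- The counit equivalence `ι → (e N) ≃ N`. -/
def counitEquiv (N : Type u) [AddCommGroup N] [Module (Matrix ι ι A) N] :
    (ι → fixedAddSubgroup A i₀ N) ≃ₗ[Matrix ι ι A] N where
  toFun v := ∑ i : ι, (Matrix.single i i₀ (1:A)) • (v i).1
  map_add' v w := by
    rw [← Finset.sum_add_distrib]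
    apply Finset.sum_congr rfl
    intro i _
    show Matrix.single i i₀ (1:A) • ((v i).1 + (w i).1) = _
    rw [smul_add]
  map_smul' B v := by
    show ∑ i : ι, Matrix.single i i₀ (1:A) • ((B • v) i).1
        = B • ∑ i : ι, Matrix.single i i₀ (1:A) • (v i).1
    rw [Finset.smul_sum]
    have lhs : ∀ j : ι, Matrix.single j i₀ (1:A) • ((B • v) j).1
        = ∑ k : ι, Matrix.single j i₀ (B j k) • (v k).1 := by
      intro j
      have h1 : ((B • v) j).1 = ∑ k : ι, (dg (B j k) : Matrix ι ι A) • (v k).1 := by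
        rw [matMod_smul_def]
        rw [AddSubmonoidClass.coe_finset_sum]
        apply Finset.sum_congr rfl
        intro k _
        rw [fixed_smul_def]
      rw [h1, Finset.smul_sum]
      apply Finset.sum_congr rfl
      intro k _
      rw [← mul_smul, eMat_mul_dg]
    simp only [lhs]
    rw [Finset.sum_comm]
    apply Finset.sum_congr rfl
    intro k _
    rw [← mul_smul, colDecomp, Finset.sum_smul]
  invFun x := fun i => ⟨Matrix.single i₀ i (1:A) • x, by
    rw [mem_fixed_iff, ← mul_smul, Matrix.single_mul_single_same, one_mul]⟩
  left_inv v := by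
    funext i
    apply Subtype.ext
    show Matrix.single i₀ i (1:A) • ∑ j : ι, Matrix.single j i₀ (1:A) • (v j).1
        = (v i).1
    rw [Finset.smul_sum, Finset.sum_eq_single i]
    · rw [← mul_smul, Matrix.single_mul_single_same, one_mul,
        (mem_fixed_iff A i₀ N (v i).1).mp (v i).2]
    · intro j _ hj
      rw [← mul_smul, Matrix.single_mul_single_of_ne (h := Ne.symm hj), zero_smul]
    · simp
  right_inv x := by
    show ∑ i : ι, Matrix.single i i₀ (1:A) • Matrix.single i₀ i (1:A) • x = x
    have h1 : ∀ i : ι, Matrix.single i i₀ (1:A) • Matrix.single i₀ i (1:A) • x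
        = Matrix.single i i (1:A) • x := by
      intro i
      rw [← mul_smul, Matrix.single_mul_single_same, one_mul]
    simp only [h1]
    rw [← Finset.sum_smul, sum_eMat_diag, one_smul]

end Morita4

section RingIso
universe u
variable {R : Type u} [Ring R] {m : ℕ}

/-- The group algebra `R[C₂]`. -/
abbrev A2 (R : Type u) [Ring R] := MonoidAlgebra R (Multiplicative (ZMod 2))

/-- The nontrivial element of `C₂`. -/
abbrev gg : Multiplicative (ZMod 2) := Multiplicative.ofAdd 1

lemma gg_mul_gg : gg * gg = 1 := by decide

lemma gg_ne_one : gg ≠ 1 := by decide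

lemma a2_decomp (x : A2 R) :
    x = MonoidAlgebra.single 1 (x.coeff 1) + MonoidAlgebra.single gg (x.coeff gg) := by
  ext a
  have h : ∀ b : Multiplicative (ZMod 2), b = 1 ∨ b = gg := by decide
  rcases h a with rfl | rfl
  · rw [MonoidAlgebra.coeff_add, Finsupp.add_apply, MonoidAlgebra.coeff_single,
      MonoidAlgebra.coeff_single, Finsupp.single_eq_same, Finsupp.single_eq_of_ne (Ne.symm gg_ne_one), add_zero]
  · rw [MonoidAlgebra.coeff_add, Finsupp.add_apply, MonoidAlgebra.coeff_single,
      MonoidAlgebra.coeff_single, Finsupp.single_eq_of_ne gg_ne_one,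
      Finsupp.single_eq_same, zero_add]

/-- Embedding of `Fin m` into the first half of `Fin (2*m)`. -/
def ι2 (p : Fin m) : Fin (2*m) := ⟨p.val, by omega⟩

lemma ι2_val (p : Fin m) : (ι2 p).val = p.val := rfl

lemma rev_ι2_val (p : Fin m) : (Fin.rev (ι2 p)).val = 2*m - 1 - p.val := by
  rw [Fin.val_rev, ι2_val]; omega

/-- The splitting equivalence. -/
def eSum (m : ℕ) : Fin m ⊕ Fin m ≃ Fin (2*m) := finSumFinEquiv.trans (finCongr (two_mul m).symm)

lemma eSum_inl_val (p : Fin m) : (eSum m (Sum.inl p)).val = p.val := by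
  simp [eSum]

lemma eSum_inr_val (p : Fin m) : (eSum m (Sum.inr p)).val = m + p.val := by
  simp [eSum]; omega

lemma sum_split {β : Type*} [AddCommMonoid β] (f : Fin (2*m) → β) :
    ∑ j, f j = ∑ k : Fin m, (f (ι2 k) + f (Fin.rev (ι2 k))) := by
  rw [← Equiv.sum_comp (eSum m) f, Fintype.sum_sum_type, Finset.sum_add_distrib]
  have g1 : ∑ p : Fin m, f (eSum m (Sum.inl p)) = ∑ p : Fin m, f (ι2 p) := by
    apply Finset.sum_congr rfl
    intro p _
    have hx : eSum m (Sum.inl p) = ι2 p := Fin.ext (by rw [eSum_inl_val, ι2_val])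
    rw [hx]
  have g2 : ∑ p : Fin m, f (eSum m (Sum.inr p)) = ∑ p : Fin m, f (Fin.rev (ι2 p)) := by
    apply Fintype.sum_equiv (Fin.revPerm (n := m))
    intro x
    have hx : eSum m (Sum.inr x) = Fin.rev (ι2 (Fin.revPerm x)) := by
      apply Fin.ext
      have h1 := eSum_inr_val (m := m) x
      have h2 := rev_ι2_val (Fin.revPerm x)
      have h3 : (Fin.revPerm x : Fin m).val = m - 1 - x.val := by
        show (Fin.rev x).val = _
        rw [Fin.val_rev]; omega
      have := x.2
      omega
    rw [hx]
  rw [g1, g2]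

lemma centro_prop {n : ℕ} (a : centroSubring R n) (i j : Fin n) :
    a.1 i j = a.1 i.rev j.rev := a.2 i j

variable (R m) in
/-- The map `S_{2m}(R) → M_m(R[C₂])`. -/
noncomputable def φfun (a : centroSubring R (2*m)) : Matrix (Fin m) (Fin m) (A2 R) :=
  Matrix.of fun p q =>
    MonoidAlgebra.single 1 (a.1 (ι2 p) (ι2 q))
      + MonoidAlgebra.single gg (a.1 (ι2 p) (Fin.rev (ι2 q)))

lemma φfun_apply (a : centroSubring R (2*m)) (p q : Fin m) :
    φfun R m a p q = MonoidAlgebra.single 1 (a.1 (ι2 p) (ι2 q))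
      + MonoidAlgebra.single gg (a.1 (ι2 p) (Fin.rev (ι2 q))) := rfl

variable (R m) in
/-- `φfun` as a ring hom. -/
noncomputable def φhom [NeZero m] : centroSubring R (2*m) →+* Matrix (Fin m) (Fin m) (A2 R) where
  toFun := φfun R m
  map_one' := by
    refine Matrix.ext fun p q => ?_
    rw [φfun_apply]
    have h1 : ((1 : centroSubring R (2*m)) : Matrix (Fin (2*m)) (Fin (2*m)) R) = 1 := rfl
    rw [h1]
    have hne : ι2 p ≠ Fin.rev (ι2 q) := by
      intro h
      have h1 := congrArg Fin.val h
      rw [rev_ι2_val] at h1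
      have := p.2; have := q.2; have hm := NeZero.pos m
      rw [ι2_val] at h1
      omega
    rw [Matrix.one_apply_ne hne]
    by_cases h : p = q
    · subst h
      rw [Matrix.one_apply_eq]
      have : (1 : Matrix (Fin m) (Fin m) (A2 R)) p p = 1 := Matrix.one_apply_eq p
      rw [this, MonoidAlgebra.one_def]
      simp
    · have hne2 : ι2 p ≠ ι2 q := by
        intro hc
        apply h
        apply Fin.ext
        have := congrArg Fin.val hc
        rw [ι2_val, ι2_val] at this
        exact this
      rw [Matrix.one_apply_ne hne2, Matrix.one_apply_ne h]
      simp
  map_mul' a b := by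
    refine Matrix.ext fun p q => ?_
    show φfun R m (a * b) p q = (φfun R m a * φfun R m b) p q
    rw [φfun_apply, Matrix.mul_apply]
    have hab : ((a * b : centroSubring R (2*m)) : Matrix (Fin (2*m)) (Fin (2*m)) R)
        = a.1 * b.1 := rfl
    rw [hab]
    have expand : ∀ k : Fin m, φfun R m a p k * φfun R m b k q
        = MonoidAlgebra.single 1
            (a.1 (ι2 p) (ι2 k) * b.1 (ι2 k) (ι2 q)
              + a.1 (ι2 p) (Fin.rev (ι2 k)) * b.1 (ι2 k) (Fin.rev (ι2 q)))
          + MonoidAlgebra.single gg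
            (a.1 (ι2 p) (ι2 k) * b.1 (ι2 k) (Fin.rev (ι2 q))
              + a.1 (ι2 p) (Fin.rev (ι2 k)) * b.1 (ι2 k) (ι2 q)) := by
      intro k
      rw [φfun_apply, φfun_apply, add_mul, mul_add, mul_add,
        MonoidAlgebra.single_mul_single, MonoidAlgebra.single_mul_single,
        MonoidAlgebra.single_mul_single, MonoidAlgebra.single_mul_single,
        one_mul, mul_one, gg_mul_gg, one_mul, MonoidAlgebra.single_add, MonoidAlgebra.single_add]
      abel
    simp only [expand]
    have hs : ∀ (g : Multiplicative (ZMod 2)) (f : Fin m → R), ∑ k, MonoidAlgebra.single g (f k)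
        = MonoidAlgebra.single g (∑ k, f k) :=
      fun g f => (map_sum (MonoidAlgebra.singleAddHom g) f _).symm
    rw [Finset.sum_add_distrib, hs, hs]
    have c1 : (a.1 * b.1) (ι2 p) (ι2 q)
        = ∑ k : Fin m, (a.1 (ι2 p) (ι2 k) * b.1 (ι2 k) (ι2 q)
            + a.1 (ι2 p) (Fin.rev (ι2 k)) * b.1 (ι2 k) (Fin.rev (ι2 q))) := by
      rw [Matrix.mul_apply, sum_split]
      apply Finset.sum_congr rfl
      intro k _
      congr 1
      rw [centro_prop b (Fin.rev (ι2 k)) (ι2 q), Fin.rev_rev]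
    have c2 : (a.1 * b.1) (ι2 p) (Fin.rev (ι2 q))
        = ∑ k : Fin m, (a.1 (ι2 p) (ι2 k) * b.1 (ι2 k) (Fin.rev (ι2 q))
            + a.1 (ι2 p) (Fin.rev (ι2 k)) * b.1 (ι2 k) (ι2 q)) := by
      rw [Matrix.mul_apply, sum_split]
      apply Finset.sum_congr rfl
      intro k _
      congr 1
      rw [centro_prop b (Fin.rev (ι2 k)) (Fin.rev (ι2 q)), Fin.rev_rev, Fin.rev_rev]
    rw [c1, c2]
  map_zero' := by
    refine Matrix.ext fun p q => ?_
    show φfun R m 0 p q = (0 : Matrix (Fin m) (Fin m) (A2 R)) p q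
    rw [φfun_apply]
    have h0 : ((0 : centroSubring R (2*m)) : Matrix (Fin (2*m)) (Fin (2*m)) R) = 0 := rfl
    simp [h0]
  map_add' a b := by
    refine Matrix.ext fun p q => ?_
    show φfun R m (a + b) p q = (φfun R m a + φfun R m b) p q
    have hab : ((a + b : centroSubring R (2*m)) : Matrix (Fin (2*m)) (Fin (2*m)) R)
        = a.1 + b.1 := rfl
    rw [Matrix.add_apply, φfun_apply, φfun_apply, φfun_apply, hab]
    simp only [Matrix.add_apply, MonoidAlgebra.single_add]
    abel

end RingIso

section RingIso2
universe u
variable {R : Type u} [Ring R] {m : ℕ}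

lemma single_pair_eval1 (x y : R) :
    (MonoidAlgebra.single (1 : Multiplicative (ZMod 2)) x + MonoidAlgebra.single gg y).coeff 1 = x := by
  rw [MonoidAlgebra.coeff_add, Finsupp.add_apply, MonoidAlgebra.coeff_single,
    MonoidAlgebra.coeff_single, Finsupp.single_eq_same, Finsupp.single_eq_of_ne (Ne.symm gg_ne_one), add_zero]

lemma single_pair_evalg (x y : R) :
    (MonoidAlgebra.single (1 : Multiplicative (ZMod 2)) x + MonoidAlgebra.single gg y).coeff gg = y := by
  rw [MonoidAlgebra.coeff_add, Finsupp.add_apply, MonoidAlgebra.coeff_single,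
    MonoidAlgebra.coeff_single, Finsupp.single_eq_of_ne gg_ne_one, Finsupp.single_eq_same,
    zero_add]

lemma cover [NeZero m] (i : Fin (2*m)) :
    (∃ p : Fin m, i = ι2 p) ∨ (∃ p : Fin m, i = Fin.rev (ι2 p)) := by
  by_cases hi : i.val < m
  · exact Or.inl ⟨⟨i.val, hi⟩, Fin.ext rfl⟩
  · refine Or.inr ⟨⟨2*m-1-i.val, by have := i.2; omega⟩, Fin.ext ?_⟩
    rw [rev_ι2_val]
    have := i.2
    simp only []
    omega

lemma φhom_injective [NeZero m] : Function.Injective (φhom R m) := by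
  intro a b h
  have E : ∀ p q : Fin m, φfun R m a p q = φfun R m b p q := by
    intro p q
    show φhom R m a p q = φhom R m b p q
    rw [h]
  have E1 : ∀ p q : Fin m, a.1 (ι2 p) (ι2 q) = b.1 (ι2 p) (ι2 q) := by
    intro p q
    have h1 := congrArg (fun z : A2 R => z.coeff (1 : Multiplicative (ZMod 2))) (E p q)
    rw [φfun_apply, φfun_apply, single_pair_eval1, single_pair_eval1] at h1
    exact h1
  have E2 : ∀ p q : Fin m, a.1 (ι2 p) (Fin.rev (ι2 q)) = b.1 (ι2 p) (Fin.rev (ι2 q)) := by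
    intro p q
    have h1 := congrArg (fun z : A2 R => z.coeff gg) (E p q)
    rw [φfun_apply, φfun_apply, single_pair_evalg, single_pair_evalg] at h1
    exact h1
  apply Subtype.ext
  apply Matrix.ext
  intro i j
  rcases cover i with ⟨p, rfl⟩ | ⟨p, rfl⟩ <;> rcases cover j with ⟨q, rfl⟩ | ⟨q, rfl⟩
  · exact E1 p q
  · exact E2 p q
  · rw [centro_prop a, centro_prop b, Fin.rev_rev]
    exact E2 p q
  · rw [centro_prop a, centro_prop b, Fin.rev_rev, Fin.rev_rev]
    exact E1 p q

variable (R m) in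
/-- The inverse matrix construction. -/
noncomputable def ψmat [NeZero m] (M : Matrix (Fin m) (Fin m) (A2 R)) :
    Matrix (Fin (2*m)) (Fin (2*m)) R :=
  Matrix.of fun i j =>
    if hi : i.val < m then
      if hj : j.val < m then (M ⟨i.val, hi⟩ ⟨j.val, hj⟩).coeff 1
      else (M ⟨i.val, hi⟩ ⟨2*m-1-j.val, by have := j.2; omega⟩).coeff gg
    else
      if hj : j.val < m then (M ⟨2*m-1-i.val, by have := i.2; omega⟩ ⟨j.val, hj⟩).coeff gg
      else (M ⟨2*m-1-i.val, by have := i.2; omega⟩ ⟨2*m-1-j.val, by have := j.2; omega⟩).coeff 1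

variable [NeZero m]

lemma ψ_at_11 (M : Matrix (Fin m) (Fin m) (A2 R)) (p q : Fin m) :
    ψmat R m M (ι2 p) (ι2 q) = (M p q).coeff 1 := by
  have hp : (ι2 p).val < m := p.2
  have hq : (ι2 q).val < m := q.2
  simp only [ψmat, Matrix.of_apply]
  rw [dif_pos hp, dif_pos hq]
  have e1 : (⟨(ι2 p).val, hp⟩ : Fin m) = p := Fin.ext rfl
  have e2 : (⟨(ι2 q).val, hq⟩ : Fin m) = q := Fin.ext rfl
  rw [e1, e2]

lemma ψ_at_10 (M : Matrix (Fin m) (Fin m) (A2 R)) (p q : Fin m) :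
    ψmat R m M (ι2 p) (Fin.rev (ι2 q)) = (M p q).coeff gg := by
  have hp : (ι2 p).val < m := p.2
  have hq : ¬ (Fin.rev (ι2 q)).val < m := by rw [rev_ι2_val]; have := q.2; omega
  simp only [ψmat, Matrix.of_apply]
  rw [dif_pos hp, dif_neg hq]
  have e1 : (⟨(ι2 p).val, hp⟩ : Fin m) = p := Fin.ext rfl
  have e2 : (⟨2*m-1-(Fin.rev (ι2 q)).val, by have := (Fin.rev (ι2 q)).2; omega⟩ : Fin m) = q :=
    Fin.ext (by show 2*m-1-(Fin.rev (ι2 q)).val = q.val; rw [rev_ι2_val]; have := q.2; omega)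
  rw [e1, e2]

lemma ψ_at_01 (M : Matrix (Fin m) (Fin m) (A2 R)) (p q : Fin m) :
    ψmat R m M (Fin.rev (ι2 p)) (ι2 q) = (M p q).coeff gg := by
  have hp : ¬ (Fin.rev (ι2 p)).val < m := by rw [rev_ι2_val]; have := p.2; omega
  have hq : (ι2 q).val < m := q.2
  simp only [ψmat, Matrix.of_apply]
  rw [dif_neg hp, dif_pos hq]
  have e1 : (⟨2*m-1-(Fin.rev (ι2 p)).val, by have := (Fin.rev (ι2 p)).2; omega⟩ : Fin m) = p :=
    Fin.ext (by show 2*m-1-(Fin.rev (ι2 p)).val = p.val; rw [rev_ι2_val]; have := p.2; omega)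
  have e2 : (⟨(ι2 q).val, hq⟩ : Fin m) = q := Fin.ext rfl
  rw [e1, e2]

lemma ψ_at_00 (M : Matrix (Fin m) (Fin m) (A2 R)) (p q : Fin m) :
    ψmat R m M (Fin.rev (ι2 p)) (Fin.rev (ι2 q)) = (M p q).coeff 1 := by
  have hp : ¬ (Fin.rev (ι2 p)).val < m := by rw [rev_ι2_val]; have := p.2; omega
  have hq : ¬ (Fin.rev (ι2 q)).val < m := by rw [rev_ι2_val]; have := q.2; omega
  simp only [ψmat, Matrix.of_apply]
  rw [dif_neg hp, dif_neg hq]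
  have e1 : (⟨2*m-1-(Fin.rev (ι2 p)).val, by have := (Fin.rev (ι2 p)).2; omega⟩ : Fin m) = p :=
    Fin.ext (by show 2*m-1-(Fin.rev (ι2 p)).val = p.val; rw [rev_ι2_val]; have := p.2; omega)
  have e2 : (⟨2*m-1-(Fin.rev (ι2 q)).val, by have := (Fin.rev (ι2 q)).2; omega⟩ : Fin m) = q :=
    Fin.ext (by show 2*m-1-(Fin.rev (ι2 q)).val = q.val; rw [rev_ι2_val]; have := q.2; omega)
  rw [e1, e2]

lemma ψmat_centro (M : Matrix (Fin m) (Fin m) (A2 R)) :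
    ψmat R m M ∈ centroSubring R (2*m) := by
  intro i j
  rcases cover i with ⟨p, rfl⟩ | ⟨p, rfl⟩ <;> rcases cover j with ⟨q, rfl⟩ | ⟨q, rfl⟩
  · rw [ψ_at_11, ψ_at_00]
  · rw [ψ_at_10, Fin.rev_rev, ψ_at_01]
  · rw [ψ_at_01, Fin.rev_rev, ψ_at_10]
  · rw [ψ_at_00, Fin.rev_rev, Fin.rev_rev, ψ_at_11]

lemma φhom_surjective : Function.Surjective (φhom R m) := by
  intro M
  refine ⟨⟨ψmat R m M, ψmat_centro M⟩, ?_⟩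
  refine Matrix.ext fun p q => ?_
  show φfun R m _ p q = M p q
  rw [φfun_apply]
  show MonoidAlgebra.single 1 (ψmat R m M (ι2 p) (ι2 q))
      + MonoidAlgebra.single gg (ψmat R m M (ι2 p) (Fin.rev (ι2 q))) = M p q
  rw [ψ_at_11, ψ_at_10]
  exact (a2_decomp (M p q)).symm

variable (R m) in
/-- The ring isomorphism `S_{2m}(R) ≃+* M_m(R[C₂])`. -/
noncomputable def φequiv : centroSubring R (2*m) ≃+* Matrix (Fin m) (Fin m) (A2 R) :=
  RingEquiv.ofBijective (φhom R m) ⟨φhom_injective, φhom_surjective⟩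

end RingIso2

section Assemble
universe u
variable (A : Type u) [Ring A] {ι : Type} [Fintype ι] [DecidableEq ι] (i₀ : ι)
open CategoryTheory

/-- Morita equivalence between `A` and `Matrix ι ι A`. -/
def matrixMoritaEquiv : ModuleCat.{u} A ≌ ModuleCat.{u} (Matrix ι ι A) :=
  CategoryTheory.Equivalence.mk (toMatrixMod A ι) (fromMatrixMod A i₀)
    (NatIso.ofComponents (fun M => (unitEquiv A i₀ M).toModuleIso) (by
      intro M M' f
      ext x
      apply Subtype.ext
      show (Pi.single i₀ (f x) : ι → M') = fun i => f ((Pi.single i₀ x : ι → M) i)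
      funext i
      by_cases h : i = i₀
      · subst h; simp
      · simp [Pi.single_eq_of_ne h]))
    (NatIso.ofComponents (fun N => (counitEquiv A i₀ N).toModuleIso) (by
      intro N P f
      ext v
      show ∑ i : ι, Matrix.single i i₀ (1:A) • f ((v i).1)
          = f (∑ i : ι, Matrix.single i i₀ (1:A) • (v i).1)
      rw [map_sum]
      apply Finset.sum_congr rfl
      intro i _
      rw [map_smul]))

end Assemble


open CategoryTheory in
/-- `S_{2m}(R)` is Morita equivalent to the group algebra `R[C_2]`: the category
of left `S_{2m}(R)`-modules is equivalent to the category of left `R[C_2]`-modules. -/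
theorem centro_even_morita_groupAlgebra (R : Type u) [Ring R] (m : ℕ) (hm : 1 ≤ m) :
    Nonempty (ModuleCat.{u} ↥(centroSubring R (2 * m)) ≌
      ModuleCat.{u} (MonoidAlgebra R (Multiplicative (ZMod 2)))) := by
  haveI : NeZero m := ⟨by omega⟩
  refine ⟨?_⟩
  have e1 : ModuleCat.{u} (Matrix (Fin m) (Fin m) (A2 R))
      ≌ ModuleCat.{u} ↥(centroSubring R (2*m)) :=
    ModuleCat.restrictScalarsEquivalenceOfRingEquiv (φequiv R m)
  exact e1.symm.trans (matrixMoritaEquiv (A2 R) (⟨0, by omega⟩ : Fin m)).symm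
end

section
/- Let R be a ring with identity and m ≥ 1. Then S_{2m}(R) is isomorphic as a ring to the full m×m matrix ring M_m(R[C_2]) over the group algebra R[C_2]; an isomorphism is given by sending the matrix (a_{ij} + b_{ij}x)_{1≤i,j≤m} over R[C_2] (x a generator of C_2) to Σ_{i,j} a_{ij} f_{ij} + b_{ij} f_{i,2m+1-j}. -/
open Multiplicative Finsupp

/-- The matrices `f_{ij}`: for `i ≠ j`, `f_{ij} = e_{ij} + e_{n+1-i, n+1-j}`, while
`f_{ii} = e_{ii} + σ_{i,n+1-i} e_{n+1-i,n+1-i}` with `σ` the anti-Kronecker delta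
(`σ_{ij} = 0` if `i = j` and `σ_{ij} = 1` otherwise); written 0-based using `Fin.rev`. -/
def fMat (R : Type*) [Ring R] (n : ℕ) (i j : Fin n) : Matrix (Fin n) (Fin n) R :=
  if i = j then
    Matrix.single i i 1 +
      (if i = i.rev then 0 else Matrix.single i.rev i.rev 1)
  else Matrix.single i j 1 + Matrix.single i.rev j.rev 1


namespace CentroAux

variable {R : Type*} [Ring R] {m : ℕ}

abbrev RC2 (R : Type*) [Ring R] := MonoidAlgebra R (Multiplicative (ZMod 2))

def upIdx (i : Fin m) : Fin (2 * m) := Fin.castLE (by omega) i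

def loIdx (p : Fin (2 * m)) : Fin m :=
  if h : (p : ℕ) < m then ⟨p, h⟩ else ⟨2 * m - 1 - p, by omega⟩

def pmIdx (p : Fin (2 * m)) : ZMod 2 := if (p : ℕ) < m then 0 else 1

@[simp] lemma val_upIdx (i : Fin m) : (upIdx i : ℕ) = i := rfl

lemma val_rev' (p : Fin (2 * m)) : (p.rev : ℕ) = 2 * m - 1 - p := by
  rw [Fin.val_rev]; omega

@[simp] lemma loIdx_upIdx (i : Fin m) : loIdx (upIdx i) = i := by
  simp [loIdx, upIdx, i.isLt]

@[simp] lemma pmIdx_upIdx (i : Fin m) : pmIdx (upIdx i) = 0 := by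
  simp [pmIdx, upIdx, i.isLt]

lemma val_upIdx_rev (i : Fin m) : ((upIdx i).rev : ℕ) = 2 * m - 1 - i := by
  rw [val_rev']; rfl

@[simp] lemma loIdx_upIdx_rev (i : Fin m) : loIdx ((upIdx i) : Fin (2*m)).rev = i := by
  have h := val_upIdx_rev i
  have hi := i.isLt
  simp only [loIdx, h]
  rw [dif_neg (by omega)]
  ext; simp; omega

@[simp] lemma pmIdx_upIdx_rev (i : Fin m) : pmIdx ((upIdx i) : Fin (2*m)).rev = 1 := by
  have h := val_upIdx_rev i
  have hi := i.isLt
  simp only [pmIdx, h]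
  rw [if_neg (by omega)]

lemma loIdx_rev (p : Fin (2 * m)) : loIdx p.rev = loIdx p := by
  have h := val_rev' p
  have hp := p.isLt
  by_cases hc : (p : ℕ) < m
  · simp only [loIdx, h]
    rw [dif_neg (by omega), dif_pos hc]
    ext
    simp only [Fin.val_rev]
    omega
  · simp only [loIdx, h]
    rw [dif_pos (by omega), dif_neg hc]

lemma pmIdx_rev (p : Fin (2 * m)) : pmIdx p.rev = 1 + pmIdx p := by
  have h := val_rev' p
  have hp := p.isLt
  by_cases hc : (p : ℕ) < m
  · simp only [pmIdx, h]; rw [if_neg (by omega), if_pos hc]; decide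
  · simp only [pmIdx, h]; rw [if_pos (by omega), if_neg hc]; decide

lemma upIdx_loIdx (p : Fin (2 * m)) (h : (p : ℕ) < m) : upIdx (loIdx p) = p := by
  simp only [loIdx]; rw [dif_pos h]; ext; rfl

lemma upIdx_loIdx_rev (p : Fin (2 * m)) (h : ¬ (p : ℕ) < m) : upIdx (loIdx p) = p.rev := by
  have hr := val_rev' p
  simp only [loIdx]; rw [dif_neg h]; ext; simp only [val_upIdx, Fin.val_rev]; omega


lemma rc2_cases : ∀ a : Multiplicative (ZMod 2), a = ofAdd 0 ∨ a = ofAdd 1 := by decide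

lemma rc2_decomp (f : RC2 R) :
    f = MonoidAlgebra.single (ofAdd (0:ZMod 2)) (f.coeff (ofAdd 0)) +
        MonoidAlgebra.single (ofAdd (1:ZMod 2)) (f.coeff (ofAdd 1)) := by
  ext a
  rcases rc2_cases a with h | h <;> subst h <;>
    · rw [MonoidAlgebra.coeff_add, Finsupp.add_apply, MonoidAlgebra.coeff_single,
        MonoidAlgebra.coeff_single, Finsupp.single_apply, Finsupp.single_apply]
      simp [show (1 : Multiplicative (ZMod 2)) ≠ ofAdd 1 from by decide]

lemma rc2_mul_apply (f g : RC2 R) (z : ZMod 2) :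
    (f * g).coeff (ofAdd z) = f.coeff (ofAdd 0) * g.coeff (ofAdd z) + f.coeff (ofAdd 1) * g.coeff (ofAdd (1 + z)) := by
  conv_lhs => rw [rc2_decomp f]
  rw [add_mul, MonoidAlgebra.coeff_add, Finsupp.add_apply, MonoidAlgebra.coeff_single_mul_apply, MonoidAlgebra.coeff_single_mul_apply]
  have h1 : ∀ w : ZMod 2, (ofAdd (0:ZMod 2))⁻¹ * ofAdd w = ofAdd w := by decide
  have h2 : ∀ w : ZMod 2, (ofAdd (1:ZMod 2))⁻¹ * ofAdd w = ofAdd (1 + w) := by decide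
  rw [h1, h2]

def toCentro (M : Matrix (Fin m) (Fin m) (RC2 R)) : Matrix (Fin (2*m)) (Fin (2*m)) R :=
  Matrix.of fun p q => (M (loIdx p) (loIdx q)).coeff (ofAdd (pmIdx p + pmIdx q))

lemma toCentro_mem (M : Matrix (Fin m) (Fin m) (RC2 R)) :
    toCentro M ∈ centroSubring R (2 * m) := by
  intro p q
  show (M (loIdx p) (loIdx q)).coeff _ = (M (loIdx p.rev) (loIdx q.rev)).coeff _
  rw [loIdx_rev, loIdx_rev, pmIdx_rev, pmIdx_rev]
  congr 2
  have : ∀ a b : ZMod 2, a + b = (1 + a) + (1 + b) := by decide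
  exact this _ _

def sumEquiv : Fin m ⊕ Fin m ≃ Fin (2 * m) where
  toFun s := Sum.elim (fun i => upIdx i) (fun i => (upIdx i).rev) s
  invFun p := if (p : ℕ) < m then Sum.inl (loIdx p) else Sum.inr (loIdx p)
  left_inv s := by
    rcases s with i | i
    · dsimp only [Sum.elim_inl]
      rw [if_pos (by simp [i.isLt]), loIdx_upIdx]
    · dsimp only [Sum.elim_inr]
      have := val_upIdx_rev i
      have hi := i.isLt
      rw [if_neg (by omega), loIdx_upIdx_rev]
  right_inv p := by
    dsimp only
    by_cases h : (p : ℕ) < m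
    · rw [if_pos h]; dsimp only [Sum.elim_inl]; exact upIdx_loIdx p h
    · rw [if_neg h]; dsimp only [Sum.elim_inr]
      rw [upIdx_loIdx_rev p h, Fin.rev_rev]


noncomputable def centroEquiv : Matrix (Fin m) (Fin m) (RC2 R) ≃+* (centroSubring R (2 * m)) where
  toFun M := ⟨toCentro M, toCentro_mem M⟩
  invFun A := Matrix.of fun i j =>
    MonoidAlgebra.single (ofAdd (0:ZMod 2)) (A.1 (upIdx i) (upIdx j)) +
    MonoidAlgebra.single (ofAdd (1:ZMod 2)) (A.1 (upIdx i) ((upIdx j) : Fin (2*m)).rev)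
  left_inv M := by
    apply Matrix.ext
    intro i j
    simp only [Matrix.of_apply, toCentro, loIdx_upIdx, pmIdx_upIdx, loIdx_upIdx_rev,
      pmIdx_upIdx_rev, add_zero, zero_add]
    exact (rc2_decomp (M i j)).symm
  right_inv A := by
    apply Subtype.ext
    apply Matrix.ext
    intro p q
    simp only [toCentro, Matrix.of_apply]
    rw [MonoidAlgebra.coeff_add, Finsupp.add_apply, MonoidAlgebra.coeff_single,
        MonoidAlgebra.coeff_single, Finsupp.single_apply, Finsupp.single_apply]
    by_cases hp : (p : ℕ) < m <;> by_cases hq : (q : ℕ) < m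
    · rw [upIdx_loIdx p hp, upIdx_loIdx q hq]
      have hz : pmIdx p + pmIdx q = 0 := by simp [pmIdx, hp, hq]
      rw [hz]
      simp [show (ofAdd (1:ZMod 2)) ≠ ofAdd 0 from by decide]
    · rw [upIdx_loIdx p hp, upIdx_loIdx_rev q hq, Fin.rev_rev]
      have hz : pmIdx p + pmIdx q = 1 := by simp [pmIdx, hp, hq]
      rw [hz]
      simp [show (ofAdd (0:ZMod 2)) ≠ ofAdd 1 from by decide,
        show (1 : Multiplicative (ZMod 2)) ≠ ofAdd 1 from by decide]
    · rw [upIdx_loIdx_rev p hp, upIdx_loIdx q hq]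
      have hz : pmIdx p + pmIdx q = 1 := by simp [pmIdx, hp, hq]
      rw [hz]
      rw [if_neg (show (ofAdd (0:ZMod 2)) ≠ ofAdd 1 from by decide), if_pos rfl,
        zero_add, ← A.2 p q]
    · rw [upIdx_loIdx_rev p hp, upIdx_loIdx_rev q hq]
      have hz : pmIdx p + pmIdx q = 0 := by simp [pmIdx, hp, hq]; decide
      rw [hz]
      rw [if_pos rfl, if_neg (show (ofAdd (1:ZMod 2)) ≠ ofAdd 0 from by decide), add_zero,
        ← A.2 p q]
  map_mul' M N := by
    apply Subtype.ext
    show toCentro (M * N) = toCentro M * toCentro N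
    apply Matrix.ext
    intro p q
    show ((M * N) (loIdx p) (loIdx q)).coeff (ofAdd (pmIdx p + pmIdx q))
        = (toCentro M * toCentro N) p q
    rw [Matrix.mul_apply, Matrix.mul_apply, MonoidAlgebra.coeff_sum, Finsupp.finset_sum_apply,
      ← Equiv.sum_comp (sumEquiv (m := m)) (fun r => toCentro M p r * toCentro N r q),
      Fintype.sum_sum_type]
    simp only [sumEquiv, Equiv.coe_fn_mk, Sum.elim_inl, Sum.elim_inr, toCentro,
      Matrix.of_apply, loIdx_upIdx, pmIdx_upIdx, loIdx_upIdx_rev, pmIdx_upIdx_rev,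
      add_zero, zero_add]
    rw [← Finset.sum_add_distrib]
    refine Finset.sum_congr rfl fun k _ => ?_
    rw [rc2_mul_apply]
    by_cases hp : (p : ℕ) < m <;> by_cases hq : (q : ℕ) < m <;>
      simp only [pmIdx, if_pos, if_neg, hp, hq, if_true, if_false]
    · norm_num
    · norm_num
    · exact add_comm _ _
    · exact add_comm _ _
  map_add' M N := by
    apply Subtype.ext
    show toCentro (M + N) = toCentro M + toCentro N
    apply Matrix.ext
    intro p q
    simp only [toCentro, Matrix.of_apply, Matrix.add_apply]
    exact Finsupp.add_apply _ _ _


lemma upIdx_ne_rev (i : Fin m) : (upIdx i : Fin (2*m)) ≠ (upIdx i : Fin (2*m)).rev := by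
  have h := val_upIdx_rev i
  have hi := i.isLt
  intro hc
  rw [Fin.ext_iff] at hc
  simp only [val_upIdx, h] at hc
  omega

lemma fMat_eq' {n : ℕ} (i j : Fin n) (h : i ≠ i.rev) :
    fMat R n i j = Matrix.single i j 1 + Matrix.single i.rev j.rev 1 := by
  unfold fMat
  by_cases hij : i = j
  · subst hij; rw [if_pos rfl, if_neg h]
  · rw [if_neg hij]

lemma fMat_up (i j : Fin m) : fMat R (2*m) (upIdx i) (upIdx j) =
    Matrix.single (upIdx i) (upIdx j) 1 +
      Matrix.single (upIdx i : Fin (2*m)).rev (upIdx j : Fin (2*m)).rev 1 :=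
  fMat_eq' _ _ (upIdx_ne_rev i)

lemma fMat_up_rev (i j : Fin m) : fMat R (2*m) (upIdx i) ((upIdx j : Fin (2*m)).rev) =
    Matrix.single (upIdx i) (upIdx j : Fin (2*m)).rev 1 +
      Matrix.single (upIdx i : Fin (2*m)).rev (upIdx j) 1 := by
  rw [fMat_eq' _ _ (upIdx_ne_rev i), Fin.rev_rev]

lemma upIdx_eq_iff (i : Fin m) (p : Fin (2*m)) (hp : (p : ℕ) < m) :
    upIdx i = p ↔ i = loIdx p := by
  rw [Fin.ext_iff, Fin.ext_iff]
  simp only [val_upIdx, loIdx]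
  rw [dif_pos hp]

lemma upIdx_ne (i : Fin m) (p : Fin (2*m)) (hp : ¬ (p : ℕ) < m) : upIdx i ≠ p := by
  intro hc
  rw [Fin.ext_iff] at hc
  simp only [val_upIdx] at hc
  exact hp (hc ▸ i.isLt)

lemma upIdx_rev_eq_iff (i : Fin m) (p : Fin (2*m)) (hp : ¬ (p : ℕ) < m) :
    (upIdx i : Fin (2*m)).rev = p ↔ i = loIdx p := by
  have h := val_upIdx_rev i
  have hi := i.isLt
  have hp2 := p.isLt
  rw [Fin.ext_iff, Fin.ext_iff]
  simp only [h, loIdx]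
  rw [dif_neg hp]
  constructor <;> intro hc <;> simp_all <;> omega

lemma upIdx_rev_ne (i : Fin m) (p : Fin (2*m)) (hp : (p : ℕ) < m) :
    (upIdx i : Fin (2*m)).rev ≠ p := by
  have h := val_upIdx_rev i
  have hi := i.isLt
  intro hc
  rw [Fin.ext_iff] at hc
  omega

end CentroAux

open CentroAux in

/-- `S_{2m}(R) ≅ M_m(R[C_2])` as rings, via the map sending the matrix
`(a_{ij} + b_{ij}·x)_{1 ≤ i,j ≤ m}` over `R[C_2]` to `Σ_{i,j} a_{ij}·f_{ij} + b_{ij}·f_{i,2m+1-j}`. -/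
theorem centro_even_iso_matrix_groupAlgebra (R : Type*) [Ring R] (m : ℕ) (hm : 1 ≤ m) :
    ∃ φ : Matrix (Fin m) (Fin m) (MonoidAlgebra R (Multiplicative (ZMod 2))) ≃+*
        ↥(centroSubring R (2 * m)),
      ∀ M : Matrix (Fin m) (Fin m) (MonoidAlgebra R (Multiplicative (ZMod 2))),
        (φ M : Matrix (Fin (2 * m)) (Fin (2 * m)) R) =
          ∑ i : Fin m, ∑ j : Fin m,
            (((M i j).coeff : Multiplicative (ZMod 2) →₀ R) (Multiplicative.ofAdd (0 : ZMod 2)) •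
                fMat R (2 * m) (Fin.castLE (by omega) i) (Fin.castLE (by omega) j) +
              ((M i j).coeff : Multiplicative (ZMod 2) →₀ R) (Multiplicative.ofAdd (1 : ZMod 2)) •
                fMat R (2 * m) (Fin.castLE (by omega) i) (Fin.castLE (by omega) j).rev) := by
  refine ⟨centroEquiv, fun M => ?_⟩
  show toCentro M = ∑ i : Fin m, ∑ j : Fin m,
      ((M i j).coeff (Multiplicative.ofAdd (0:ZMod 2)) • fMat R (2*m) (upIdx i) (upIdx j) +
       (M i j).coeff (Multiplicative.ofAdd (1:ZMod 2)) •
        fMat R (2*m) (upIdx i) ((upIdx j : Fin (2*m)).rev))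
  apply Matrix.ext
  intro p q
  simp only [toCentro, Matrix.of_apply, Matrix.sum_apply, Matrix.add_apply, Matrix.smul_apply,
    fMat_up, fMat_up_rev, Matrix.single, smul_eq_mul]
  by_cases hp : (p : ℕ) < m <;> by_cases hq : (q : ℕ) < m
  · simp [upIdx_eq_iff _ _ hp, upIdx_eq_iff _ _ hq,
      show ∀ i : Fin m, ¬((upIdx i : Fin (2*m)).rev = p) from fun i => upIdx_rev_ne i p hp,
      show ∀ j : Fin m, ¬((upIdx j : Fin (2*m)).rev = q) from fun j => upIdx_rev_ne j q hq,
      ite_and, mul_ite, mul_one, mul_zero, Finset.sum_ite_eq', pmIdx, hp, hq]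
  · simp [upIdx_eq_iff _ _ hp, upIdx_rev_eq_iff _ _ hq,
      show ∀ i : Fin m, ¬((upIdx i : Fin (2*m)).rev = p) from fun i => upIdx_rev_ne i p hp,
      show ∀ j : Fin m, ¬(upIdx j = q) from fun j => upIdx_ne j q hq,
      ite_and, mul_ite, mul_one, mul_zero, Finset.sum_ite_eq', pmIdx, hp, hq]
  · simp [upIdx_rev_eq_iff _ _ hp, upIdx_eq_iff _ _ hq,
      show ∀ i : Fin m, ¬(upIdx i = p) from fun i => upIdx_ne i p hp,
      show ∀ j : Fin m, ¬((upIdx j : Fin (2*m)).rev = q) from fun j => upIdx_rev_ne j q hq,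
      ite_and, mul_ite, mul_one, mul_zero, Finset.sum_ite_eq', pmIdx, hp, hq]
  · simp [upIdx_rev_eq_iff _ _ hp, upIdx_rev_eq_iff _ _ hq,
      show ∀ i : Fin m, ¬(upIdx i = p) from fun i => upIdx_ne i p hp,
      show ∀ j : Fin m, ¬(upIdx j = q) from fun j => upIdx_ne j q hq,
      ite_and, mul_ite, mul_one, mul_zero, Finset.sum_ite_eq', pmIdx, hp, hq,
      show ((1:ZMod 2) + 1) = 0 from by decide]
end

section
/- Let R be a ring with identity, n ≥ 4, and 1 ≤ j ≤ ⌊n/2⌋. Then the map φ: S_n(R)·f_1 → S_n(R)·f_j defined by a·f_1 ↦ a·f_1·(e_{1j} + e_{n,n+1-j}) is an isomorphism of left S_n(R)-modules. -/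
-- auxiliary lemmas
lemma fMat_eq (R : Type*) [Ring R] (n : ℕ) (a b : Fin n) (ha : a ≠ a.rev) :
    fMat R n a b = Matrix.single a b 1 + Matrix.single a.rev b.rev 1 := by
  rcases eq_or_ne a b with h | h
  · subst h; unfold fMat; rw [if_pos rfl, if_neg ha]
  · unfold fMat; rw [if_neg h]

lemma stdPair_prod (R : Type*) [Ring R] (n : ℕ) (a b d : Fin n) (hb : b ≠ b.rev) :
    (Matrix.single a b (1:R) + Matrix.single a.rev b.rev 1) *
      (Matrix.single b d 1 + Matrix.single b.rev d.rev 1) =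
    Matrix.single a d 1 + Matrix.single a.rev d.rev 1 := by
  have ms : ∀ x y z : Fin n,
      Matrix.single x y (1:R) * Matrix.single y z 1 =
        Matrix.single x z 1 := fun x y z => by
    simpa using Matrix.single_mul_single_same (i := x) (j := y) (c := (1:R)) z 1
  rw [add_mul, mul_add, mul_add, ms, ms,
    Matrix.single_mul_single_of_ne (c := (1:R)) _ _ _ hb _,
    Matrix.single_mul_single_of_ne (c := (1:R)) _ _ _ (Ne.symm hb) _]
  abel

lemma std_rev_apply (R : Type*) [Ring R] (n : ℕ) (a b i k : Fin n) (c : R) :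
    Matrix.single a b c i.rev k.rev = Matrix.single a.rev b.rev c i k := by
  simp only [Matrix.single, Matrix.of_apply]
  congr 1
  rw [eq_iff_iff]
  constructor <;> rintro ⟨rfl, rfl⟩ <;> simp

lemma stdPair_mem (R : Type*) [Ring R] (n : ℕ) (a b : Fin n) :
    (Matrix.single a b (1:R) + Matrix.single a.rev b.rev 1) ∈
      centroSubring R n := by
  intro i k
  simp only [Matrix.add_apply]
  rw [std_rev_apply, std_rev_apply, Fin.rev_rev, Fin.rev_rev, add_comm]

/-- for `n ≥ 4` and `1 ≤ j ≤ ⌊n/2⌋` (0-based: `j.val + 1 ≤ n/2`), the map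
`φ : S_n(R)·f_1 → S_n(R)·f_j`, `a·f_1 ↦ a·f_1·(e_{1j} + e_{n,n+1-j})`, is an isomorphism of
left `S_n(R)`-modules.  (Here `e_{1j} + e_{n,n+1-j} = f_{1j}`, and `S_n(R)·f_i` is realised as
the span of `f_i` over the subring `S_n(R)` inside `M_n(R)`.) -/
theorem centro_span_f_one_iso (R : Type*) [Ring R] (n : ℕ) (hn : 4 ≤ n) (j : Fin n)
    (hj : (j : ℕ) + 1 ≤ n / 2) :
    ∃ φ : ↥(Submodule.span ↥(centroSubring R n)
            {fMat R n (⟨0, by omega⟩ : Fin n) (⟨0, by omega⟩ : Fin n)}) ≃ₗ[↥(centroSubring R n)]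
          ↥(Submodule.span ↥(centroSubring R n) {fMat R n j j}),
      ∀ x, (φ x : Matrix (Fin n) (Fin n) R) =
        (x : Matrix (Fin n) (Fin n) R) * fMat R n (⟨0, by omega⟩ : Fin n) j := by
  have hn0 : 0 < n := by omega
  set z : Fin n := ⟨0, hn0⟩ with hzdef
  have hz : z ≠ z.rev := by
    intro h
    have := congrArg Fin.val h
    simp only [Fin.val_rev, hzdef] at this
    omega
  have hjne : j ≠ j.rev := by
    intro h
    have := congrArg Fin.val h
    simp only [Fin.val_rev] at this
    omega
  set M := Matrix (Fin n) (Fin n) R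
  set Sg := ↥(centroSubring R n)
  set f1 : M := fMat R n z z with hf1def
  set fj : M := fMat R n j j with hfjdef
  set E : M := Matrix.single z j 1 + Matrix.single z.rev j.rev 1 with hEdef
  set F : M := Matrix.single j z 1 + Matrix.single j.rev z.rev 1 with hFdef
  have hf1 : f1 = Matrix.single z z 1 + Matrix.single z.rev z.rev 1 :=
    fMat_eq R n z z hz
  have hfj : fj = Matrix.single j j 1 + Matrix.single j.rev j.rev 1 :=
    fMat_eq R n j j hjne
  have hf1E : f1 * E = E := by rw [hf1, hEdef, stdPair_prod R n z z j hz]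
  have hEfj : E * fj = E := by rw [hfj, hEdef, stdPair_prod R n z j j hjne]
  have hEF : E * F = f1 := by rw [hEdef, hFdef, stdPair_prod R n z j z hjne, hf1]
  have hFE : F * E = fj := by rw [hEdef, hFdef, stdPair_prod R n j z j hz, hfj]
  have hfjF : fj * F = F := by rw [hfj, hFdef, stdPair_prod R n j j z hjne]
  have hFf1 : F * f1 = F := by rw [hf1, hFdef, stdPair_prod R n j z z hz]
  have hEmem : E ∈ centroSubring R n := stdPair_mem R n z j
  have hFmem : F ∈ centroSubring R n := stdPair_mem R n j z
  set A := Submodule.span Sg {f1}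
  set B := Submodule.span Sg {fj}
  have hsmul : ∀ (s : Sg) (x : M), s • x = (s : M) * x := fun _ _ => rfl
  let mulE : M →ₗ[Sg] M :=
    { toFun := fun x => x * E
      map_add' := fun x y => add_mul x y E
      map_smul' := fun s x => by
        simp only [RingHom.id_apply, hsmul, mul_assoc] }
  let mulF : M →ₗ[Sg] M :=
    { toFun := fun x => x * F
      map_add' := fun x y => add_mul x y F
      map_smul' := fun s x => by
        simp only [RingHom.id_apply, hsmul, mul_assoc] }
  have hA : ∀ x ∈ A, x * E ∈ B := by
    intro x hx
    obtain ⟨s, rfl⟩ := Submodule.mem_span_singleton.mp hx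
    refine Submodule.mem_span_singleton.mpr ⟨s * ⟨E, hEmem⟩, ?_⟩
    show ((s : M) * E) * fj = ((s : M) * f1) * E
    rw [mul_assoc, hEfj, mul_assoc, hf1E]
  have hB : ∀ y ∈ B, y * F ∈ A := by
    intro y hy
    obtain ⟨t, rfl⟩ := Submodule.mem_span_singleton.mp hy
    refine Submodule.mem_span_singleton.mpr ⟨t * ⟨F, hFmem⟩, ?_⟩
    show ((t : M) * F) * f1 = ((t : M) * fj) * F
    rw [mul_assoc, hFf1, mul_assoc, hfjF]
  let φ₀ : A →ₗ[Sg] B :=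
    LinearMap.codRestrict B (mulE.comp A.subtype) (fun x => hA x x.2)
  let ψ₀ : B →ₗ[Sg] A :=
    LinearMap.codRestrict A (mulF.comp B.subtype) (fun y => hB y y.2)
  have hAE : ∀ x ∈ A, (x * E) * F = x := by
    intro x hx
    obtain ⟨s, rfl⟩ := Submodule.mem_span_singleton.mp hx
    show (((s : M) * f1) * E) * F = (s : M) * f1
    rw [mul_assoc (s : M), hf1E, mul_assoc, hEF]
  have hBF : ∀ y ∈ B, (y * F) * E = y := by
    intro y hy
    obtain ⟨t, rfl⟩ := Submodule.mem_span_singleton.mp hy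
    show (((t : M) * fj) * F) * E = (t : M) * fj
    rw [mul_assoc (t : M), hfjF, mul_assoc, hFE]
  refine ⟨LinearEquiv.ofLinear φ₀ ψ₀ ?_ ?_, ?_⟩
  · exact LinearMap.ext fun y => Subtype.ext (hBF y y.2)
  · exact LinearMap.ext fun x => Subtype.ext (hAE x x.2)
  · intro x
    show (x : M) * E = (x : M) * fMat R n z j
    rw [fMat_eq R n z j hz]
end

section
/- Let R be a commutative ring, m ≥ 0 and n = 2m+1. Set f := e_{m+1,m+1} ∈ S_n(R). Then f·S_n(R)·f = R·f; in particular, the map R → f·S_n(R)·f sending r to r·f is an isomorphism of R-algebras. -/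
/-- The matrix unit `f = e_{m+1, m+1}` in `M_{2m+1}(R)` (0-based: the `(m, m)` matrix unit). -/
def midE (R : Type*) [Ring R] (m : ℕ) : Matrix (Fin (2*m+1)) (Fin (2*m+1)) R :=
  Matrix.single ⟨m, by omega⟩ ⟨m, by omega⟩ 1

/-- for `n = 2m+1` and `f = e_{m+1,m+1}`, one has `f·S_n(R)·f = R·f`; in
particular `r ↦ r·f` is an isomorphism of `R`-algebras from `R` onto `f·S_n(R)·f` (it is
bijective onto `f·S_n(R)·f` and multiplicative). -/
theorem corner_eq_scalar_mul (R : Type*) [CommRing R] (m : ℕ) :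
    ({x : Matrix (Fin (2*m+1)) (Fin (2*m+1)) R |
        ∃ s ∈ centroSubring R (2*m+1), x = midE R m * s * midE R m} =
      {x : Matrix (Fin (2*m+1)) (Fin (2*m+1)) R | ∃ r : R, x = r • midE R m}) ∧
    Function.Injective (fun r : R => r • midE R m) ∧
    (∀ r r' : R, (r • midE R m) * (r' • midE R m) = (r * r') • midE R m) := by
  have key : ∀ s : Matrix (Fin (2*m+1)) (Fin (2*m+1)) R,
      midE R m * s * midE R m = (s ⟨m, by omega⟩ ⟨m, by omega⟩) • midE R m := by
    intro s
    ext i j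
    simp [midE, Matrix.mul_apply, Matrix.single, Matrix.of_apply, Matrix.smul_apply,
      Finset.sum_ite_eq, Finset.mul_sum, ite_and, mul_comm]
    split_ifs <;> simp_all
  refine ⟨?_, ?_, ?_⟩
  · ext x
    constructor
    · rintro ⟨s, hs, rfl⟩
      exact ⟨_, key s⟩
    · rintro ⟨r, rfl⟩
      refine ⟨r • 1, ?_, ?_⟩
      · intro i j
        simp [Matrix.smul_apply, Matrix.one_apply, Fin.rev_inj]
      · rw [key]
        simp
  · intro r r' h
    have := congrArg (fun M => M ⟨m, by omega⟩ ⟨m, by omega⟩) h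
    simpa [midE, Matrix.single, Matrix.of_apply] using this
  · intro r r'
    rw [smul_mul_assoc, mul_smul_comm, smul_smul]
    congr 1
    show midE R m * midE R m = midE R m
    simp [midE, Matrix.single_mul_single_same]
end

section
/- Let R be a commutative ring, m ≥ 1 and n = 2m+1, and let J := S_n(R)·e_{m+1,m+1}·S_n(R) be the two-sided ideal of S_n(R) generated by the idempotent e_{m+1,m+1}. Then the quotient ring S_n(R)/J is isomorphic as an R-algebra to the full matrix algebra M_m(R), via the map induced by sending f_{ij} to the matrix unit of M_m(R) at position (i,j) for 1 ≤ i,j ≤ m. -/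
/-- The centrosymmetric matrix algebra `S_n(R)` over a commutative ring `R`, as an
`R`-subalgebra of `M_n(R)`. -/
def centroSubalgebra (R : Type*) [CommRing R] (n : ℕ) :
    Subalgebra R (Matrix (Fin n) (Fin n) R) :=
  { (centroSubring R n).toSubsemiring with
    algebraMap_mem' := fun r i j => by
      simp only [Matrix.algebraMap_matrix_apply, Fin.rev_inj] }

private theorem stdBasis_rev (R : Type*) [Ring R] {n : ℕ} (a b p q : Fin n) :
    Matrix.single a b (1:R) p.rev q.rev = Matrix.single a.rev b.rev 1 p q := by
  simp only [Matrix.single, Matrix.of_apply, Fin.rev_eq_iff]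

theorem fMat_mem (R : Type*) [Ring R] (n : ℕ) (i j : Fin n) :
    fMat R n i j ∈ centroSubring R n := by
  intro p q
  unfold fMat
  split_ifs with h1 h2
  · subst h1
    simp only [Matrix.add_apply, Matrix.zero_apply, add_zero]
    rw [stdBasis_rev, ← h2]
  · subst h1
    simp only [Matrix.add_apply]
    simp only [stdBasis_rev, Fin.rev_rev]
    exact add_comm _ _
  · simp only [Matrix.add_apply]
    simp only [stdBasis_rev, Fin.rev_rev]
    exact add_comm _ _

theorem fMat_memA (R : Type*) [CommRing R] (n : ℕ) (i j : Fin n) :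
    fMat R n i j ∈ centroSubalgebra R n :=
  fMat_mem R n i j

private theorem midFin_rev (m : ℕ) :
    (⟨m, by omega⟩ : Fin (2*m+1)).rev = ⟨m, by omega⟩ := by
  ext
  simp only [Fin.val_rev]
  omega

theorem midE_memA (R : Type*) [CommRing R] (m : ℕ) :
    midE R m ∈ centroSubalgebra R (2*m+1) := by
  have h := fMat_mem R (2*m+1) (⟨m, by omega⟩ : Fin (2*m+1)) ⟨m, by omega⟩
  unfold fMat at h
  rw [if_pos rfl, if_pos (midFin_rev m).symm, add_zero] at h
  exact h

/-- The two-sided ideal `J = S_n(R)·e_{m+1,m+1}·S_n(R)` of `S_n(R)` generated by the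
idempotent `e_{m+1,m+1}`, for `n = 2m+1`. -/
def midIdeal (R : Type*) [CommRing R] (m : ℕ) :
    TwoSidedIdeal ↥(centroSubalgebra R (2*m+1)) :=
  TwoSidedIdeal.span {(⟨midE R m, midE_memA R m⟩ : ↥(centroSubalgebra R (2*m+1)))}

namespace CentroAux

/-- The middle index. -/
def mid (m : ℕ) : Fin (2*m+1) := ⟨m, by omega⟩

/-- Inclusion `Fin m → Fin (2m+1)`. -/
def cL {m : ℕ} (i : Fin m) : Fin (2*m+1) := Fin.castLE (by omega) i

/-- Inclusion `Fin (m+1) → Fin (2m+1)`. -/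
def cM {m : ℕ} (k : Fin (m+1)) : Fin (2*m+1) := ⟨k.1, by omega⟩

@[simp] lemma cL_val {m : ℕ} (i : Fin m) : (cL i).val = i.val := rfl
@[simp] lemma cM_val {m : ℕ} (k : Fin (m+1)) : (cM k).val = k.val := rfl
@[simp] lemma mid_val (m : ℕ) : (mid m).val = m := rfl

@[simp] lemma rev_val {m : ℕ} (p : Fin (2*m+1)) : p.rev.val = 2*m - p.val := by
  simp only [Fin.val_rev]; omega

@[simp] lemma mid_rev (m : ℕ) : (mid m).rev = mid m := by
  ext; simp; omega

lemma sum_split {M : Type*} [AddCommMonoid M] (m : ℕ) (F : Fin (2*m+1) → M) :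
    ∑ k, F k = (∑ k : Fin m, (F (cL k) + F (cL k).rev)) + F (mid m) := by
  classical
  set f : ℕ → M := fun k => if h : k < 2*m+1 then F ⟨k, h⟩ else 0 with hf
  have hF : ∀ k : Fin (2*m+1), F k = f k.val := by
    intro k
    rw [hf]
    simp only [k.isLt, dif_pos]
  calc ∑ k : Fin (2*m+1), F k = ∑ k : Fin (2*m+1), f k.val :=
        Finset.sum_congr rfl fun k _ => hF k
    _ = ∑ k ∈ Finset.range (2*m+1), f k := Fin.sum_univ_eq_sum_range f (2*m+1)
    _ = _ := by
        rw [Finset.range_eq_Ico,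
          ← Finset.sum_Ico_consecutive f (Nat.zero_le (m+1)) (by omega : m+1 ≤ 2*m+1),
          ← Finset.range_eq_Ico, Finset.sum_range_succ]
        have hrefl : ∑ j ∈ Finset.Ico 0 m, f (2*m - j)
            = ∑ j ∈ Finset.Ico (m+1) (2*m+1), f j := by
          have := Finset.sum_Ico_reflect f 0 (by omega : m ≤ 2*m + 1)
          have e1 : 2*m+1 - m = m+1 := by omega
          have e2 : 2*m+1 - 0 = 2*m+1 := by omega
          rw [this, e1, e2]
        rw [← Finset.range_eq_Ico] at hrefl
        rw [← hrefl]
        have h2 : ∑ k : Fin m, (F (cL k) + F (cL k).rev)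
            = ∑ x ∈ Finset.range m, (f x + f (2*m - x)) := by
          rw [← Fin.sum_univ_eq_sum_range (fun k => f k + f (2*m - k)) m]
          refine Finset.sum_congr rfl fun k _ => ?_
          rw [hF, hF]
          simp
        rw [h2, Finset.sum_add_distrib, hF (mid m)]
        simp only [mid_val]
        abel

variable {R : Type*} [CommRing R] {m : ℕ}

lemma memC {a : Matrix (Fin (2*m+1)) (Fin (2*m+1)) R} (h : a ∈ centroSubalgebra R (2*m+1)) :
    ∀ i j, a i j = a i.rev j.rev := h

/-- The underlying function of the quotient map composed with a section of `M_m(R)`. -/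
def psiFun (a : Matrix (Fin (2*m+1)) (Fin (2*m+1)) R) : Matrix (Fin m) (Fin m) R :=
  Matrix.of fun i j => a (cL i) (cL j) - a (cL i) (cL j).rev

lemma cL_ne_rev (i j : Fin m) : cL i ≠ (cL j).rev := by
  intro h
  have := congrArg Fin.val h
  simp only [cL_val, rev_val] at this
  have hi := i.isLt
  have hj := j.isLt
  omega

lemma psiFun_one : psiFun (1 : Matrix (Fin (2*m+1)) (Fin (2*m+1)) R) = 1 := by
  ext i j
  simp only [psiFun, Matrix.of_apply, Matrix.one_apply]
  rw [if_neg (cL_ne_rev i j), sub_zero]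
  by_cases h : i = j
  · subst h; simp
  · rw [if_neg h, if_neg (by simpa [cL, Fin.castLE_inj] using h)]

lemma psiFun_mul {a b : Matrix (Fin (2*m+1)) (Fin (2*m+1)) R}
    (ha : a ∈ centroSubalgebra R (2*m+1)) (hb : b ∈ centroSubalgebra R (2*m+1)) :
    psiFun (a * b) = psiFun a * psiFun b := by
  ext i j
  simp only [psiFun, Matrix.of_apply, Matrix.mul_apply]
  rw [← Finset.sum_sub_distrib]
  have hterm : ∀ k, a (cL i) k * b k (cL j) - a (cL i) k * b k (cL j).rev
      = a (cL i) k * (b k (cL j) - b k (cL j).rev) := fun k => (mul_sub _ _ _).symm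
  rw [Finset.sum_congr rfl fun k _ => hterm k,
    sum_split m (fun k => a (cL i) k * (b k (cL j) - b k (cL j).rev))]
  have hmid : b (mid m) (cL j) - b (mid m) (cL j).rev = 0 := by
    rw [memC hb (mid m) (cL j), mid_rev, sub_self]
  rw [hmid, mul_zero, add_zero]
  refine Finset.sum_congr rfl fun k _ => ?_
  have h1 : b (cL k).rev (cL j) = b (cL k) (cL j).rev := by
    rw [memC hb (cL k).rev (cL j), Fin.rev_rev]
  have h2 : b (cL k).rev (cL j).rev = b (cL k) (cL j) := by
    rw [memC hb (cL k).rev (cL j).rev, Fin.rev_rev, Fin.rev_rev]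
  rw [h1, h2]
  ring

/-- The quotient homomorphism `S_{2m+1}(R) →ₐ[R] M_m(R)`. -/
def psi (R : Type*) [CommRing R] (m : ℕ) :
    centroSubalgebra R (2*m+1) →ₐ[R] Matrix (Fin m) (Fin m) R where
  toFun a := psiFun a.1
  map_one' := psiFun_one
  map_mul' a b := psiFun_mul a.2 b.2
  map_zero' := by ext i j; simp [psiFun]
  map_add' a b := by ext i j; simp [psiFun]; ring
  commutes' r := by
    ext i j
    simp only [psiFun, Matrix.of_apply, Subalgebra.coe_algebraMap,
      Matrix.algebraMap_matrix_apply]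
    rw [if_neg (cL_ne_rev i j), sub_zero]
    by_cases h : i = j
    · subst h; simp
    · rw [if_neg (by simpa [cL, Fin.castLE_inj] using h), if_neg h]

lemma psi_apply (a : centroSubalgebra R (2*m+1)) (p q : Fin m) :
    psi R m a p q = a.1 (cL p) (cL q) - a.1 (cL p) (cL q).rev := rfl

lemma psi_fMat (i j : Fin m) :
    psi R m ⟨fMat R (2*m+1) (cL i) (cL j), fMat_memA R (2*m+1) _ _⟩
      = Matrix.single i j 1 := by
  have hi := i.isLt; have hj := j.isLt
  ext p q
  have hp := p.isLt; have hq := q.isLt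
  rw [psi_apply]
  show fMat R (2*m+1) (cL i) (cL j) (cL p) (cL q)
      - fMat R (2*m+1) (cL i) (cL j) (cL p) (cL q).rev
      = Matrix.single i j 1 p q
  unfold fMat
  split_ifs with h1 h2 <;>
    simp only [Fin.ext_iff, cL_val, rev_val] at * <;>
    simp only [Matrix.add_apply, Matrix.zero_apply, Matrix.single_apply,
      Fin.ext_iff, cL_val, rev_val, add_zero] <;>
    split_ifs <;> first | omega | norm_num | (exfalso; omega)

lemma psi_e : psi R m ⟨midE R m, midE_memA R m⟩ = 0 := by
  ext p q
  have hp := p.isLt; have hq := q.isLt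
  rw [psi_apply]
  show midE R m (cL p) (cL q) - midE R m (cL p) (cL q).rev = 0
  unfold midE
  simp only [Matrix.single_apply, Fin.ext_iff, cL_val, rev_val, mid_val]
  split_ifs <;> first | omega | norm_num | (exfalso; omega)

lemma mul_e_mul (X Y : Matrix (Fin (2*m+1)) (Fin (2*m+1)) R) (p q : Fin (2*m+1)) :
    (X * midE R m * Y) p q = X p (mid m) * Y (mid m) q := by
  simp only [midE, Matrix.mul_apply, Matrix.single, Matrix.of_apply, ite_and,
    mul_ite, ite_mul, mul_one, mul_zero, zero_mul, one_mul, Finset.sum_ite_eq,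
    Finset.mem_univ, if_true]
  rfl

lemma col_apply (k : Fin (m+1)) (p : Fin (2*m+1)) :
    fMat R (2*m+1) (cM k) (mid m) p (mid m)
      = if p = cM k ∨ p = (cM k).rev then (1:R) else 0 := by
  have hk := k.isLt; have hp := p.isLt
  unfold fMat
  split_ifs <;>
    simp only [Matrix.add_apply, Matrix.zero_apply, Matrix.single, Matrix.of_apply,
      add_zero] <;>
    split_ifs <;>
    simp only [Fin.ext_iff, cM_val, mid_val, rev_val, and_true, true_and] at * <;>
    first | rfl | omega | norm_num

lemma row_apply (l : Fin (m+1)) (q : Fin (2*m+1)) :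
    fMat R (2*m+1) (mid m) (cM l) (mid m) q
      = if q = cM l ∨ q = (cM l).rev then (1:R) else 0 := by
  have hl := l.isLt; have hq := q.isLt
  unfold fMat
  split_ifs <;>
    simp only [Matrix.add_apply, Matrix.zero_apply, Matrix.single, Matrix.of_apply,
      add_zero] <;>
    split_ifs <;>
    simp only [Fin.ext_iff, cM_val, mid_val, rev_val, and_true, true_and] at * <;>
    first | rfl | omega | norm_num

lemma ker_le (a : centroSubalgebra R (2*m+1)) (ha : psi R m a = 0) : a ∈ midIdeal R m := by
  have hc : ∀ p q, a.1 p q = a.1 p.rev q.rev := memC a.2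
  have hker : ∀ i j : Fin m, a.1 (cL i) (cL j) = a.1 (cL i) (cL j).rev := by
    intro i j
    have h0 : psi R m a i j = 0 := by rw [ha]; rfl
    rw [psi_apply] at h0
    exact sub_eq_zero.mp h0
  have key : ∀ (p q : Fin (2*m+1)), p.val < m → q.val < m → a.1 p q = a.1 p q.rev := by
    intro p q hp hq
    have h := hker ⟨p.1, hp⟩ ⟨q.1, hq⟩
    have ep : cL (⟨p.1, hp⟩ : Fin m) = p := by ext; rfl
    have eq' : cL (⟨q.1, hq⟩ : Fin m) = q := by ext; rfl
    rwa [ep, eq'] at h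
  have H1 : ∀ p q : Fin (2*m+1), p.val < m → a.1 p q = a.1 p q.rev := by
    intro p q hp
    rcases lt_trichotomy q.val m with h|h|h
    · exact key p q hp h
    · have hq : q.rev = q := by ext; simp; omega
      rw [hq]
    · have hq' : q.rev.val < m := by simp; omega
      have h2 := key p q.rev hp hq'
      rw [Fin.rev_rev] at h2
      exact h2.symm
  have Hq : ∀ p q : Fin (2*m+1), a.1 p q = a.1 p q.rev := by
    intro p q
    rcases lt_trichotomy p.val m with h|h|h
    · exact H1 p q h
    · have hp : p.rev = p := by ext; simp; omega
      calc a.1 p q = a.1 p.rev q.rev := hc p q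
        _ = a.1 p q.rev := by rw [hp]
    · have hp' : p.rev.val < m := by simp; omega
      have h2 := H1 p.rev q.rev hp'
      rw [Fin.rev_rev] at h2
      calc a.1 p q = a.1 p.rev q.rev := hc p q
        _ = a.1 p.rev q := h2
        _ = a.1 p.rev.rev q.rev := hc p.rev q
        _ = a.1 p q.rev := by rw [Fin.rev_rev]
  have Hp : ∀ p q : Fin (2*m+1), a.1 p q = a.1 p.rev q := by
    intro p q
    calc a.1 p q = a.1 p q.rev := Hq p q
      _ = a.1 p.rev q.rev.rev := hc p q.rev
      _ = a.1 p.rev q := by rw [Fin.rev_rev]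
  set xM : Fin (m+1) → centroSubalgebra R (2*m+1) :=
    fun k => ⟨fMat R (2*m+1) (cM k) (mid m), fMat_memA R _ _ _⟩ with hxM
  set yM : Fin (m+1) → centroSubalgebra R (2*m+1) :=
    fun l => ⟨fMat R (2*m+1) (mid m) (cM l), fMat_memA R _ _ _⟩ with hyM
  set eS : centroSubalgebra R (2*m+1) := ⟨midE R m, midE_memA R m⟩ with heS
  have hsel : ∀ (p : Fin (2*m+1)) (k : Fin (m+1)),
      (p = cM k ∨ p = (cM k).rev) ↔ k.val = min p.val (2*m - p.val) := by
    intro p k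
    have hp := p.isLt; have hk := k.isLt
    simp only [Fin.ext_iff, cM_val, rev_val]
    omega
  have hdecomp : a = ∑ k : Fin (m+1), ∑ l : Fin (m+1),
      a.1 (cM k) (cM l) • (xM k * eS * yM l) := by
    apply Subtype.ext
    rw [AddSubmonoidClass.coe_finset_sum]
    ext p q
    rw [Matrix.sum_apply]
    have hterm : ∀ k : Fin (m+1),
        ((∑ l : Fin (m+1), a.1 (cM k) (cM l) • (xM k * eS * yM l) :
          centroSubalgebra R (2*m+1)) : Matrix (Fin (2*m+1)) (Fin (2*m+1)) R) p q
        = ∑ l : Fin (m+1), a.1 (cM k) (cM l) *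
            ((if p = cM k ∨ p = (cM k).rev then (1:R) else 0) *
             (if q = cM l ∨ q = (cM l).rev then (1:R) else 0)) := by
      intro k
      rw [AddSubmonoidClass.coe_finset_sum, Matrix.sum_apply]
      refine Finset.sum_congr rfl fun l _ => ?_
      rw [SetLike.val_smul, Matrix.smul_apply, smul_eq_mul]
      congr 1
      calc ((xM k * eS * yM l : centroSubalgebra R (2*m+1)) :
              Matrix (Fin (2*m+1)) (Fin (2*m+1)) R) p q
          = ((xM k : Matrix (Fin (2*m+1)) (Fin (2*m+1)) R) * midE R m
              * (yM l : Matrix (Fin (2*m+1)) (Fin (2*m+1)) R)) p q := by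
            norm_cast
        _ = (xM k : Matrix (Fin (2*m+1)) (Fin (2*m+1)) R) p (mid m)
              * (yM l : Matrix (Fin (2*m+1)) (Fin (2*m+1)) R) (mid m) q := mul_e_mul _ _ _ _
        _ = _ := by rw [hxM, hyM]; exact congrArg₂ (· * ·) (col_apply k p) (row_apply l q)
    rw [Finset.sum_congr rfl fun k _ => hterm k]
    set k0 : Fin (m+1) := ⟨min p.val (2*m - p.val), by omega⟩ with hk0
    set l0 : Fin (m+1) := ⟨min q.val (2*m - q.val), by omega⟩ with hl0
    rw [Finset.sum_eq_single k0]
    · rw [Finset.sum_eq_single l0]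
      · rw [if_pos ((hsel p k0).mpr rfl), if_pos ((hsel q l0).mpr rfl), one_mul, mul_one]
        have h1 : a.1 (cM k0) (cM l0) = a.1 p (cM l0) := by
          rcases le_or_gt p.val m with h|h
          · have hpe : cM k0 = p := by
              have := p.isLt; ext; simp only [cM_val, hk0]; omega
            rw [hpe]
          · have hpe : cM k0 = p.rev := by
              have := p.isLt; ext; simp only [cM_val, hk0, rev_val]; omega
            rw [hpe, ← Hp p (cM l0)]
        have h2 : a.1 p (cM l0) = a.1 p q := by
          rcases le_or_gt q.val m with h|h
          · have hqe : cM l0 = q := by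
              have := q.isLt; ext; simp only [cM_val, hl0]; omega
            rw [hqe]
          · have hqe : cM l0 = q.rev := by
              have := q.isLt; ext; simp only [cM_val, hl0, rev_val]; omega
            rw [hqe, ← Hq p q]
        rw [h1, h2]
      · intro l _ hl
        have hQ : ¬(q = cM l ∨ q = (cM l).rev) := by
          rw [hsel]
          intro hv
          exact hl (Fin.ext hv)
        simp only [if_neg hQ, mul_zero]
      · intro h; exact absurd (Finset.mem_univ _) h
    · intro k _ hk
      refine Finset.sum_eq_zero fun l _ => ?_
      have hP : ¬(p = cM k ∨ p = (cM k).rev) := by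
        rw [hsel]
        intro hv
        exact hk (Fin.ext hv)
      simp only [if_neg hP, zero_mul, mul_zero]
    · intro h; exact absurd (Finset.mem_univ _) h
  rw [hdecomp]
  refine TwoSidedIdeal.finsetSum_mem _ _ _ fun k _ =>
    TwoSidedIdeal.finsetSum_mem _ _ _ fun l _ => ?_
  have he : eS ∈ midIdeal R m := TwoSidedIdeal.subset_span (Set.mem_singleton _)
  have h1 : xM k * eS ∈ midIdeal R m := (midIdeal R m).mul_mem_left _ _ he
  have h2 : xM k * eS * yM l ∈ midIdeal R m := (midIdeal R m).mul_mem_right _ _ h1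
  rw [Algebra.smul_def]
  exact (midIdeal R m).mul_mem_left _ _ h2

lemma span_le_ker (x : centroSubalgebra R (2*m+1)) (hx : x ∈ midIdeal R m) :
    psi R m x = 0 := by
  have hmem : x ∈ TwoSidedIdeal.ker (psi R m) := by
    refine TwoSidedIdeal.mem_span_iff.mp hx _ ?_
    intro y hy
    rw [Set.mem_singleton_iff] at hy
    subst hy
    rw [SetLike.mem_coe, TwoSidedIdeal.mem_ker]
    exact psi_e
  rwa [TwoSidedIdeal.mem_ker] at hmem

lemma rel_iff_psi (x y : centroSubalgebra R (2*m+1)) :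
    (midIdeal R m).ringCon x y ↔ psi R m x = psi R m y := by
  rw [TwoSidedIdeal.rel_iff]
  constructor
  · intro h
    have h2 := span_le_ker _ h
    rw [map_sub] at h2
    exact sub_eq_zero.mp h2
  · intro h
    apply ker_le
    rw [map_sub, h, sub_self]

/-- A section of `psi`. -/
def sec (b : Matrix (Fin m) (Fin m) R) : Matrix (Fin (2*m+1)) (Fin (2*m+1)) R :=
  Matrix.of fun p q =>
    if hp : p.val < m then (if hq : q.val < m then b ⟨p.1, hp⟩ ⟨q.1, hq⟩ else 0)
    else if hp' : 2*m - p.val < m then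
      (if hq' : 2*m - q.val < m then b ⟨2*m - p.1, hp'⟩ ⟨2*m - q.1, hq'⟩ else 0)
    else 0

lemma sec_mem (b : Matrix (Fin m) (Fin m) R) : sec b ∈ centroSubalgebra R (2*m+1) := by
  intro p q
  have hp := p.isLt; have hq := q.isLt
  simp only [sec, Matrix.of_apply, rev_val]
  split_ifs <;>
    first
      | rfl
      | omega
      | (congr 1 <;> first | (ext; simp; omega) | (ext; omega) | rfl)

lemma psi_sec (b : Matrix (Fin m) (Fin m) R) :
    psi R m ⟨sec b, sec_mem b⟩ = b := by
  ext i j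
  have hi := i.isLt; have hj := j.isLt
  rw [psi_apply]
  show sec b (cL i) (cL j) - sec b (cL i) (cL j).rev = b i j
  simp only [sec, Matrix.of_apply, cL_val, rev_val]
  split_ifs <;> first | omega | (simp; intro; omega) | simp

/-- The induced isomorphism on the quotient. -/
def phi (R : Type*) [CommRing R] (m : ℕ) :
    (midIdeal R m).ringCon.Quotient ≃ₐ[R] Matrix (Fin m) (Fin m) R where
  toFun := fun x => Quotient.liftOn' x (fun a => psi R m a)
    (fun a b h => (rel_iff_psi a b).mp h)
  invFun := fun b => ((⟨sec b, sec_mem b⟩ : centroSubalgebra R (2*m+1)) :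
    (midIdeal R m).ringCon.Quotient)
  left_inv := by
    intro x
    induction x using Quotient.inductionOn' with
    | h a =>
      show ((⟨sec (psi R m a), sec_mem _⟩ : centroSubalgebra R (2*m+1)) :
        (midIdeal R m).ringCon.Quotient) = ((a : centroSubalgebra R (2*m+1)) :
        (midIdeal R m).ringCon.Quotient)
      exact (RingCon.eq _).mpr ((rel_iff_psi _ _).mpr (psi_sec _))
  right_inv := fun b => psi_sec b
  map_mul' := by
    intro x y
    induction x using Quotient.inductionOn' with
    | h a =>
      induction y using Quotient.inductionOn' with
      | h b =>
        show psi R m (a * b) = psi R m a * psi R m b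
        exact map_mul _ _ _
  map_add' := by
    intro x y
    induction x using Quotient.inductionOn' with
    | h a =>
      induction y using Quotient.inductionOn' with
      | h b =>
        show psi R m (a + b) = psi R m a + psi R m b
        exact map_add _ _ _
  commutes' := fun r => (psi R m).commutes r

end CentroAux

/-- for `n = 2m+1`, `m ≥ 1`, the quotient `S_n(R)/J` by the two-sided ideal `J`
generated by `e_{m+1,m+1}` is isomorphic as an `R`-algebra to `M_m(R)`, via the map induced by
sending `f_{ij}` to the matrix unit at position `(i,j)` for `1 ≤ i,j ≤ m`. -/
theorem centro_quot_iso_matrix (R : Type*) [CommRing R] (m : ℕ) (hm : 1 ≤ m) :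
    ∃ φ : (midIdeal R m).ringCon.Quotient ≃ₐ[R] Matrix (Fin m) (Fin m) R,
      ∀ i j : Fin m,
        φ (((⟨fMat R (2*m+1) (Fin.castLE (by omega) i) (Fin.castLE (by omega) j),
              fMat_memA R (2*m+1) _ _⟩ : ↥(centroSubalgebra R (2*m+1))) :
            (midIdeal R m).ringCon.Quotient)) = Matrix.single i j 1 := by
  refine ⟨CentroAux.phi R m, fun i j => ?_⟩
  exact CentroAux.psi_fMat i j
end

section
/- Let R be a commutative ring and n ≥ 2. Then the center of the centrosymmetric matrix algebra S_n(R) equals R·1 + R·c = {r·1 + s·c : r, s ∈ R}, the R-subalgebra generated by the exchange matrix c; in particular, the center is a free R-module of rank 2. -/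
/-- The exchange matrix `c = e_{1,n} + e_{2,n-1} + ⋯ + e_{n,1}` (sum of the matrix units
`e_{i, n+1-i}`, written 0-based using `Fin.rev`). -/
def exchMat (R : Type*) [Ring R] (n : ℕ) : Matrix (Fin n) (Fin n) R :=
  ∑ i : Fin n, Matrix.single i i.rev 1

lemma exchMat_apply (R : Type*) [CommRing R] {n : ℕ} (a b : Fin n) :
    exchMat R n a b = if b = a.rev then 1 else 0 := by
  unfold exchMat
  rw [Matrix.sum_apply, Finset.sum_eq_single a]
  · show (if a = a ∧ a.rev = b then (1:R) else 0) = _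
    simp [eq_comm]
  · intro i _ hi
    show (if i = a ∧ i.rev = b then (1:R) else 0) = 0
    simp [hi]
  · simp

lemma mul_std {R : Type*} [CommRing R] {n : ℕ} (z : Matrix (Fin n) (Fin n) R) (k l a b : Fin n) :
    (z * Matrix.single k l (1:R)) a b = if b = l then z a k else 0 := by
  rw [Matrix.mul_apply]
  have : ∀ j : Fin n, z a j * Matrix.single k l (1:R) j b
      = if j = k then (if b = l then z a k else 0) else 0 := by
    intro j
    show z a j * (if k = j ∧ l = b then (1:R) else 0) = _
    simp only [show (k = j ∧ l = b) ↔ (j = k ∧ b = l) from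
      ⟨fun ⟨h1, h2⟩ => ⟨h1.symm, h2.symm⟩, fun ⟨h1, h2⟩ => ⟨h1.symm, h2.symm⟩⟩]
    by_cases h1 : j = k <;> by_cases h2 : b = l <;> simp [h1, h2]
  simp [this]

lemma std_mul {R : Type*} [CommRing R] {n : ℕ} (z : Matrix (Fin n) (Fin n) R) (k l a b : Fin n) :
    (Matrix.single k l (1:R) * z) a b = if a = k then z l b else 0 := by
  rw [Matrix.mul_apply]
  have : ∀ j : Fin n, Matrix.single k l (1:R) a j * z j b
      = if j = l then (if a = k then z l b else 0) else 0 := by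
    intro j
    show (if k = a ∧ l = j then (1:R) else 0) * z j b = _
    simp only [show (k = a ∧ l = j) ↔ (a = k ∧ j = l) from
      ⟨fun ⟨h1, h2⟩ => ⟨h1.symm, h2.symm⟩, fun ⟨h1, h2⟩ => ⟨h1.symm, h2.symm⟩⟩]
    by_cases h1 : j = l <;> by_cases h2 : a = k <;> simp [h1, h2]
  simp [this]

lemma symGen_mem {R : Type*} [CommRing R] {n : ℕ} (k l : Fin n) :
    (Matrix.single k l (1:R) + Matrix.single k.rev l.rev 1)
      ∈ centroSubring R n := by
  intro i j
  simp only [Matrix.add_apply]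
  show ((if k = i ∧ l = j then (1:R) else 0) + (if k.rev = i ∧ l.rev = j then 1 else 0))
     = ((if k = i.rev ∧ l = j.rev then (1:R) else 0) +
        (if k.rev = i.rev ∧ l.rev = j.rev then 1 else 0))
  simp only [Fin.rev_inj, show (k = i.rev) ↔ (k.rev = i) from Fin.rev_eq_iff.symm,
    show (l = j.rev) ↔ (l.rev = j) from Fin.rev_eq_iff.symm]
  exact add_comm _ _

lemma key {R : Type*} [CommRing R] {n : ℕ} {z : Matrix (Fin n) (Fin n) R}
    (hc : ∀ y ∈ centroSubring R n, z * y = y * z) (k l a b : Fin n) :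
    ((if b = l then z a k else 0) + (if b = l.rev then z a k.rev else 0))
    = ((if a = k then z l b else 0) + (if a = k.rev then z l.rev b else 0)) := by
  have h := hc _ (symGen_mem (R := R) k l)
  have h2 := congrFun (congrFun h a) b
  simpa only [Matrix.mul_add, Matrix.add_mul, Matrix.add_apply, mul_std, std_mul] using h2

/-- for a commutative ring `R` and `n ≥ 2`, the center of `S_n(R)` equals
`R·1 + R·c`, the `R`-subalgebra generated by the exchange matrix `c`; moreover `{1, c}` is
`R`-linearly independent, so the center is a free `R`-module of rank `2`. -/
theorem centro_center_eq (R : Type*) [CommRing R] (n : ℕ) (hn : 2 ≤ n) :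
    (∀ z ∈ centroSubring R n,
      ((∀ y ∈ centroSubring R n, z * y = y * z) ↔
        ∃ r s : R, z = r • (1 : Matrix (Fin n) (Fin n) R) + s • exchMat R n)) ∧
    (∀ r s : R, r • (1 : Matrix (Fin n) (Fin n) R) + s • exchMat R n = 0 →
      r = 0 ∧ s = 0) := by
  have hpos : 0 < n := by omega
  set i0 : Fin n := ⟨0, hpos⟩ with hi0
  have h0 : i0 ≠ i0.rev := by
    intro h
    have := congrArg Fin.val h
    rw [Fin.val_rev] at this
    simp only [hi0] at this
    omega
  have hfix : ∀ i j : Fin n, i = i.rev → j = j.rev → i = j := by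
    intro i j hi hj
    have h1 := congrArg Fin.val hi
    have h2 := congrArg Fin.val hj
    rw [Fin.val_rev] at h1 h2
    have := i.isLt
    have := j.isLt
    exact Fin.ext (by omega)
  have hentry : ∀ (r s : R) (i j : Fin n),
      (r • (1 : Matrix (Fin n) (Fin n) R) + s • exchMat R n) i j
        = (if i = j then r else 0) + (if j = i.rev then s else 0) := by
    intro r s i j
    simp only [Matrix.add_apply, Matrix.smul_apply, Matrix.one_apply, exchMat_apply,
      smul_eq_mul, mul_ite, mul_one, mul_zero]
  constructor
  · intro z _hz
    constructor
    · intro hc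
      refine ⟨z i0 i0, z i0 i0.rev, ?_⟩
      ext i j
      rw [hentry]
      by_cases hij : i = j
      · subst hij
        by_cases hrev : i = i.rev
        · have hk := key hc i0 i i0 i
          rw [if_pos rfl, if_pos hrev, if_pos rfl, if_neg h0, add_zero] at hk
          rw [if_pos rfl, if_pos hrev]
          exact hk.symm
        · have hk := key hc i0 i i0 i
          rw [if_pos rfl, if_neg hrev, if_pos rfl, if_neg h0, add_zero, add_zero] at hk
          rw [if_pos rfl, if_neg hrev, add_zero]
          exact hk.symm
      · by_cases hrev : j = i.rev
        · subst hrev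
          have hk := key hc i0 i i0 i.rev
          rw [if_neg (fun h : i.rev = i => hij h.symm), if_pos rfl, if_pos rfl,
            if_neg h0, add_zero, zero_add] at hk
          rw [if_neg hij, if_pos rfl, zero_add]
          exact hk.symm
        · rw [if_neg hij, if_neg hrev, add_zero]
          by_cases hii : i = i.rev
          · -- then j ≠ j.rev
            have hjj : j ≠ j.rev := fun h => hij (hfix i j hii h)
            have hk := key hc j j i j
            rw [if_pos rfl, if_neg hjj, add_zero, if_neg hij,
              if_neg (fun h : i = j.rev => hrev (Fin.rev_eq_iff.mpr h).symm), add_zero] at hk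
            exact hk
          · have hk := key hc i i.rev i.rev j
            simp only [Fin.rev_rev] at hk
            rw [if_neg hrev, if_neg (fun h : j = i => hij h.symm),
              if_neg (fun h : i.rev = i => hii h.symm)] at hk
            simpa using hk.symm
    · rintro ⟨r, s, rfl⟩ y hy
      have hcy : exchMat R n * y = y * exchMat R n := by
        ext a b
        rw [Matrix.mul_apply, Matrix.mul_apply]
        have h1 : ∀ k : Fin n, exchMat R n a k * y k b
            = if k = a.rev then y a.rev b else 0 := by
          intro k; rw [exchMat_apply]
          by_cases h : k = a.rev <;> simp [h]
        have h2 : ∀ k : Fin n, y a k * exchMat R n k b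
            = if k = b.rev then y a b.rev else 0 := by
          intro k; rw [exchMat_apply]
          by_cases hk : k = b.rev
          · subst hk
            rw [if_pos rfl, if_pos (Fin.rev_rev b).symm, mul_one]
          · rw [if_neg hk, if_neg (fun hb : b = k.rev => hk (Fin.rev_eq_iff.mp hb.symm)),
              mul_zero]
        simp only [h1, h2, Finset.sum_ite_eq', Finset.mem_univ, if_pos]
        have := hy a.rev b
        rwa [Fin.rev_rev] at this
      rw [add_mul, mul_add, Matrix.smul_mul, Matrix.mul_smul, Matrix.smul_mul,
        Matrix.mul_smul, one_mul, mul_one, hcy]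
  · intro r s h
    have h1 := congrFun (congrFun h i0) i0
    have h2 := congrFun (congrFun h i0) i0.rev
    rw [hentry, Matrix.zero_apply, if_pos rfl, if_neg h0, add_zero] at h1
    rw [hentry, Matrix.zero_apply, if_neg h0, if_pos rfl, zero_add] at h2
    exact ⟨h1, h2⟩
end
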